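/- arXiv:2409.00711 — 4 statements merged into one kernel-verified Lean document; each statement's English description precedes it below -/
import Mathlib

section
/- The vacuum expectation value of a product of an even number N of fermionic fields equals 2^{-N/2} Π_{i<j} (p_i - p_j)/(p_i + p_j), and it vanishes if N is odd. -/
open Finset Polynomial

/-- The Pfaffian of an `N × N` matrix, via the Laplace-type expansion along the first row.
For odd `N` it is `0`, matching the convention that only even-sized skew-symmetric matrices
have a (possibly nonzero) Pfaffian. -/
noncomputable def pf (R : Type*) [CommRing R] : (N : ℕ) → Matrix (Fin N) (Fin N) R → R
  | 0, _ => 1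
  | 1, _ => 0
  | (N+2), A => ∑ j : Fin (N+1), (-1 : R)^(j:ℕ) * A 0 j.succ *
      pf R N (fun a b => A ((j.succAbove a).succ) ((j.succAbove b).succ))

lemma pf_two_step (R : Type*) [CommRing R] (N : ℕ) (A : Matrix (Fin (N+2)) (Fin (N+2)) R) :
    pf R (N+2) A = ∑ j : Fin (N+1), (-1 : R)^(j:ℕ) * A 0 j.succ *
      pf R N (fun a b => A ((j.succAbove a).succ) ((j.succAbove b).succ)) := rfl

lemma pf_smul (R : Type*) [CommRing R] (c : R) : ∀ (N : ℕ) (A : Matrix (Fin N) (Fin N) R),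
    pf R N (fun i j => c * A i j) = c^(N/2) * pf R N A
  | 0, A => by simp [pf]
  | 1, A => by simp [pf]
  | (N+2), A => by
      show (∑ j : Fin (N+1), (-1 : R)^(j:ℕ) * (c * A 0 j.succ) *
        pf R N (fun a b => c * A ((j.succAbove a).succ) ((j.succAbove b).succ))) = _
      rw [pf_two_step, Finset.mul_sum]
      refine Finset.sum_congr rfl fun j _ => ?_
      erw [pf_smul R c N]
      have h2 : (N+2)/2 = N/2 + 1 := by omega
      rw [h2]
      ring

section Pairs

variable {M : Type*} [CommMonoid M]

def pairs (m : ℕ) : Finset (Fin m × Fin m) := univ.filter fun p => p.1 < p.2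

lemma prod_pairs (m : ℕ) (F : Fin m → Fin m → M) :
    ∏ p ∈ pairs m, F p.1 p.2 = ∏ i, ∏ j ∈ Ioi i, F i j := by
  rw [pairs, ← univ_product_univ, prod_filter,
    prod_product' (f := fun i j => if i < j then F i j else 1)]
  refine prod_congr rfl fun i _ => ?_
  rw [← prod_filter]
  congr 1
  ext j; simp

lemma prod_pairs_avoid (m : ℕ) (j : Fin (m+1)) (F : Fin (m+1) → Fin (m+1) → M) :
    ∏ p ∈ (pairs (m+1)).filter (fun p => p.1 ≠ j ∧ p.2 ≠ j), F p.1 p.2 =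
      ∏ a : Fin m, ∏ b ∈ Ioi a, F (j.succAbove a) (j.succAbove b) := by
  rw [← prod_pairs]
  refine (Finset.prod_bij (fun (p : Fin m × Fin m) _ => (j.succAbove p.1, j.succAbove p.2))
    ?_ ?_ ?_ ?_).symm
  · intro p hp
    simp only [pairs, mem_filter, mem_univ, true_and] at hp ⊢
    exact ⟨Fin.succAbove_lt_succAbove_iff.mpr hp, Fin.succAbove_ne _ _, Fin.succAbove_ne _ _⟩
  · intro p hp q hq h
    simp only [Prod.mk.injEq] at h
    have inj := Fin.succAbove_right_injective (p := j)
    exact Prod.ext (inj h.1) (inj h.2)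
  · intro p hp
    simp only [pairs, mem_filter, mem_univ, true_and] at hp
    obtain ⟨a, ha⟩ := Fin.exists_succAbove_eq hp.2.1
    obtain ⟨b, hb⟩ := Fin.exists_succAbove_eq hp.2.2
    refine ⟨(a, b), ?_, ?_⟩
    · simp only [pairs, mem_filter, mem_univ, true_and]
      rw [← Fin.succAbove_lt_succAbove_iff (p := j), ha, hb]; exact hp.1
    · simp [ha, hb]
  · intros; rfl

lemma prod_pairs_with (m : ℕ) (j : Fin (m+1)) (F : Fin (m+1) → Fin (m+1) → M) :
    ∏ p ∈ (pairs (m+1)).filter (fun p => ¬(p.1 ≠ j ∧ p.2 ≠ j)), F p.1 p.2 =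
      (∏ i ∈ Iio j, F i j) * ∏ k ∈ Ioi j, F j k := by
  rw [← prod_filter_mul_prod_filter_not ((pairs (m+1)).filter
      (fun p => ¬(p.1 ≠ j ∧ p.2 ≠ j))) (fun p => p.2 = j)]
  congr 1
  · have hset : ((pairs (m+1)).filter (fun p => ¬(p.1 ≠ j ∧ p.2 ≠ j))).filter
        (fun p => p.2 = j) = (Iio j).image (fun i => (i, j)) := by
      ext p
      simp only [pairs, mem_filter, mem_univ, true_and, mem_image, mem_Iio, Prod.ext_iff]
      constructor
      · rintro ⟨⟨hlt, -⟩, h2⟩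
        exact ⟨p.1, by rw [h2] at hlt; exact hlt, rfl, h2.symm⟩
      · rintro ⟨i, hi, rfl, rfl⟩
        exact ⟨⟨hi, fun h => absurd rfl h.2⟩, rfl⟩
    rw [hset, prod_image (by intro a _ b _ h; exact ((Prod.ext_iff).mp h).1)]
  · have hset : ((pairs (m+1)).filter (fun p => ¬(p.1 ≠ j ∧ p.2 ≠ j))).filter
        (fun p => ¬ p.2 = j) = (Ioi j).image (fun k => (j, k)) := by
      ext p
      simp only [pairs, mem_filter, mem_univ, true_and, mem_image, mem_Ioi, Prod.ext_iff]
      constructor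
      · rintro ⟨⟨hlt, hor⟩, h2⟩
        have h1 : p.1 = j := by tauto
        exact ⟨p.2, by rw [h1] at hlt; exact hlt, h1.symm, rfl⟩
      · rintro ⟨k, hk, rfl, rfl⟩
        exact ⟨⟨hk, fun h => absurd rfl h.1⟩, hk.ne'⟩
    rw [hset, prod_image (by intro a _ b _ h; exact ((Prod.ext_iff).mp h).2)]

lemma prod_Ioi_split (m : ℕ) (j : Fin (m+1)) (F : Fin (m+1) → Fin (m+1) → M) :
    ∏ i, ∏ k ∈ Ioi i, F i k =
      (∏ a : Fin m, ∏ b ∈ Ioi a, F (j.succAbove a) (j.succAbove b)) *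
      ((∏ i ∈ Iio j, F i j) * ∏ k ∈ Ioi j, F j k) := by
  rw [← prod_pairs, ← prod_filter_mul_prod_filter_not (pairs (m+1))
    (fun p => p.1 ≠ j ∧ p.2 ≠ j), prod_pairs_avoid, prod_pairs_with]

end Pairs

section Star

variable {m : ℕ} (hm : Odd m) (x : Fin m → ℝ) (hinj : Function.Injective x)
  (hx : ∀ i j, x i + x j ≠ 0)

noncomputable def eC (x : Fin m → ℝ) : Fin m → ℝ :=
  fun j => 2 * x j * ∏ i ∈ univ.erase j, ((x j + x i)/(x j - x i))

include hm hinj in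
lemma polyQ : ∀ t : ℝ, (∏ k, (t - x k)) - (∏ k, (t + x k))
    + ∑ j, eC x j * ∏ i ∈ univ.erase j, (t + x i) = 0 := by
  have hm1 : 1 ≤ m := hm.pos
  set P : Polynomial ℝ := (∏ k, (X - C (x k))) - (∏ k, (X + C (x k)))
    + ∑ j, C (eC x j) * ∏ i ∈ univ.erase j, (X + C (x i)) with hPdef
  have hsub : ∀ i j : Fin m, i ≠ j → x i - x j ≠ 0 :=
    fun i j h => sub_ne_zero.mpr (fun e => h (hinj e))
  have hdegA : (∏ k : Fin m, (X - C (x k))).degree = (m : WithBot ℕ) := by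
    simpa using degree_prod_of_monic (univ : Finset (Fin m)) _ (fun i _ => monic_X_sub_C (x i))
  have hdegB : (∏ k : Fin m, (X + C (x k))).degree = (m : WithBot ℕ) := by
    simpa using degree_prod_of_monic (univ : Finset (Fin m)) _ (fun i _ => monic_X_add_C (x i))
  have hmonA : (∏ k : Fin m, (X - C (x k))).Monic :=
    monic_prod_of_monic _ _ fun i _ => monic_X_sub_C (x i)
  have hmonB : (∏ k : Fin m, (X + C (x k))).Monic :=
    monic_prod_of_monic _ _ fun i _ => monic_X_add_C (x i)
  have hdeg1 : ((∏ k : Fin m, (X - C (x k))) - ∏ k : Fin m, (X + C (x k))).degree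
      < (m : WithBot ℕ) := by
    rw [← hdegA]
    exact degree_sub_lt (hdegA.trans hdegB.symm) hmonA.ne_zero
      (hmonA.leadingCoeff.trans hmonB.leadingCoeff.symm)
  have hdeg2 : (∑ j, C (eC x j) * ∏ i ∈ univ.erase j, (X + C (x i))).degree
      < (m : WithBot ℕ) := by
    refine lt_of_le_of_lt (degree_sum_le _ _) ?_
    rw [Finset.sup_lt_iff (by exact_mod_cast WithBot.bot_lt_coe m)]
    intro j _
    refine lt_of_le_of_lt (degree_mul_le _ _) ?_
    have h2 : (∏ i ∈ univ.erase j, (X + C (x i))).degree = ((m - 1 : ℕ) : WithBot ℕ) := by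
      simpa [Finset.card_erase_of_mem] using
        degree_prod_of_monic (univ.erase j) _ (fun i _ => monic_X_add_C (x i))
    calc (C (eC x j)).degree + (∏ i ∈ univ.erase j, (X + C (x i))).degree
        ≤ 0 + ((m - 1 : ℕ) : WithBot ℕ) := add_le_add degree_C_le h2.le
      _ = ((m - 1 : ℕ) : WithBot ℕ) := by rw [zero_add]
      _ < (m : WithBot ℕ) := by exact_mod_cast Nat.sub_lt hm1 one_pos
  have hdegP : P.degree < (m : WithBot ℕ) := lt_of_le_of_lt (degree_add_le _ _)
      (max_lt hdeg1 hdeg2)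
  have heval : ∀ l : Fin m, P.eval (-(x l)) = 0 := by
    intro l
    have hB : (∏ k : Fin m, (X + C (x k))).eval (-(x l)) = 0 := by
      rw [eval_prod]
      exact Finset.prod_eq_zero (mem_univ l) (by simp)
    have hS : ∑ j, eC x j * ∏ i ∈ univ.erase j, (-(x l) + x i)
        = eC x l * ∏ i ∈ univ.erase l, (-(x l) + x i) := by
      refine Finset.sum_eq_single l (fun j _ hj => ?_) (by simp)
      refine mul_eq_zero_of_right _ (Finset.prod_eq_zero
        (Finset.mem_erase.mpr ⟨Ne.symm hj, mem_univ l⟩) (by ring))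
    have hA : (∏ k : Fin m, (X - C (x k))).eval (-(x l)) = ∏ k, (-(x l) - x k) := by
      simp [eval_prod]
    have key : ∏ k, (-(x l) - x k) + eC x l * ∏ i ∈ univ.erase l, (-(x l) + x i) = 0 := by
      have e1 : ∏ k, (-(x l) - x k) = (-1)^m * ∏ k, (x l + x k) := by
        calc ∏ k, (-(x l) - x k) = ∏ k : Fin m, (-1) * (x l + x k) :=
              Finset.prod_congr rfl fun k _ => by ring
          _ = (-1)^m * ∏ k, (x l + x k) := by
              rw [Finset.prod_mul_distrib, Finset.prod_const, card_univ, Fintype.card_fin]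
      have e2 : ∏ k, (x l + x k) = (2 * x l) * ∏ k ∈ univ.erase l, (x l + x k) := by
        rw [← Finset.mul_prod_erase univ _ (mem_univ l)]; ring_nf
      have e3 : eC x l * ∏ i ∈ univ.erase l, (-(x l) + x i)
          = 2 * x l * ∏ i ∈ univ.erase l, ((x l + x i)/(x l - x i) * (-(x l) + x i)) := by
        rw [eC, mul_assoc, ← Finset.prod_mul_distrib]
      have e4 : ∀ i ∈ univ.erase l, (x l + x i)/(x l - x i) * (-(x l) + x i)
          = -1 * (x l + x i) := by
        intro i hi
        have : x l - x i ≠ 0 := hsub l i (Finset.ne_of_mem_erase hi).symm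
        field_simp
        ring
      rw [e1, e2, e3, Finset.prod_congr rfl e4, Finset.prod_mul_distrib, Finset.prod_const,
        hm.neg_one_pow, Finset.card_erase_of_mem (mem_univ l)]
      rw [card_univ, Fintype.card_fin]
      have heven : Even (m - 1) := by
        rcases hm with ⟨c, hc⟩; exact ⟨c, by omega⟩
      rw [heven.neg_one_pow]
      ring
    rw [hPdef]
    simp only [eval_add, eval_sub, eval_finset_sum, eval_mul, eval_C, hB, hA, sub_zero,
      eval_prod, eval_X]
    calc (∏ k, (-(x l) - x k)) + ∑ j, eC x j * ∏ i ∈ univ.erase j, (-(x l) + x i)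
        = (∏ k, (-(x l) - x k)) + eC x l * ∏ i ∈ univ.erase l, (-(x l) + x i) := by rw [hS]
      _ = 0 := key
  have hP0 : P = 0 := by
    refine P.eq_zero_of_natDegree_lt_card_of_eval_eq_zero (f := fun l => -(x l))
      (fun a b h => hinj (neg_injective h)) heval ?_
    rw [Fintype.card_fin]
    by_cases hP : P = 0
    · simp [hP]; omega
    · exact (natDegree_lt_iff_degree_lt hP).mpr (by simpa using hdegP)
  intro t
  have := congrArg (eval t) hP0
  simpa [hPdef, eval_prod, eval_finset_sum] using this

include hm hinj hx in
lemma star (x0 : ℝ) (h0 : ∀ j, x0 + x j ≠ 0) :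
    ∑ j, (x0 - x j)/(x0 + x j) * ∏ i ∈ univ.erase j, ((x j + x i)/(x j - x i))
      = ∏ j, (x0 - x j)/(x0 + x j) := by
  have hxne : ∀ i, x i ≠ 0 := fun i h => hx i i (by rw [h]; ring)
  have hgsum : ∑ j, ∏ i ∈ univ.erase j, ((x j + x i)/(x j - x i)) = 1 := by
    have h := polyQ hm x hinj 0
    have e1 : ∏ k, ((0:ℝ) - x k) = -∏ k, x k := by
      calc ∏ k, ((0:ℝ) - x k) = ∏ k : Fin m, (-1) * x k :=
            Finset.prod_congr rfl fun k _ => by ring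
        _ = (-1)^m * ∏ k, x k := by
            rw [Finset.prod_mul_distrib, Finset.prod_const, card_univ, Fintype.card_fin]
        _ = -∏ k, x k := by rw [hm.neg_one_pow]; ring
    rw [e1] at h
    simp only [zero_add] at h
    have e2 : ∑ j, eC x j * ∏ i ∈ univ.erase j, x i
        = (∑ j, ∏ i ∈ univ.erase j, ((x j + x i)/(x j - x i))) * (2 * ∏ k, x k) := by
      rw [Finset.sum_mul]
      refine Finset.sum_congr rfl fun j _ => ?_
      rw [eC, ← Finset.mul_prod_erase univ x (mem_univ j)]
      ring
    rw [e2] at h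
    have hprod : (∏ k, x k) ≠ 0 := Finset.prod_ne_zero_iff.mpr fun i _ => hxne i
    have h2 : (∑ j, ∏ i ∈ univ.erase j, ((x j + x i)/(x j - x i))) * (2 * ∏ k, x k)
        = 1 * (2 * ∏ k, x k) := by rw [one_mul]; linarith
    exact mul_right_cancel₀ (by simpa using hprod) h2
  have hprod0 : (∏ k, (x0 + x k)) ≠ 0 := Finset.prod_ne_zero_iff.mpr fun i _ => h0 i
  have hesum : ∑ j, eC x j / (x0 + x j) = 1 - ∏ k, (x0 - x k)/(x0 + x k) := by
    have h := polyQ hm x hinj x0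
    have e2 : ∑ j, eC x j * ∏ i ∈ univ.erase j, (x0 + x i)
        = (∑ j, eC x j / (x0 + x j)) * ∏ k, (x0 + x k) := by
      rw [Finset.sum_mul]
      refine Finset.sum_congr rfl fun j _ => ?_
      rw [← Finset.mul_prod_erase univ (fun k => x0 + x k) (mem_univ j),
        div_mul_eq_mul_div, mul_comm (x0 + x j),
        mul_div_assoc, mul_div_assoc, div_self (h0 j), mul_one]
    rw [e2] at h
    rw [Finset.prod_div_distrib]
    rw [eq_sub_iff_add_eq]
    field_simp
    linarith
  have hterm : ∀ j : Fin m, (x0 - x j)/(x0 + x j) * ∏ i ∈ univ.erase j, ((x j + x i)/(x j - x i))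
      = (∏ i ∈ univ.erase j, ((x j + x i)/(x j - x i))) - eC x j / (x0 + x j) := by
    intro j
    rw [eC, eq_sub_iff_add_eq, div_mul_eq_mul_div, div_add_div _ _ (h0 j) (h0 j),
      div_eq_iff (mul_ne_zero (h0 j) (h0 j))]
    ring
  calc ∑ j, (x0 - x j)/(x0 + x j) * ∏ i ∈ univ.erase j, ((x j + x i)/(x j - x i))
      = ∑ j, ((∏ i ∈ univ.erase j, ((x j + x i)/(x j - x i))) - eC x j / (x0 + x j)) :=
        Finset.sum_congr rfl fun j _ => hterm j
    _ = 1 - (1 - ∏ k, (x0 - x k)/(x0 + x k)) := by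
        rw [Finset.sum_sub_distrib, hgsum, hesum]
    _ = ∏ j, (x0 - x j)/(x0 + x j) := by ring

end Star

-- the "avoid" product in terms of the full product
lemma avoid_eq (m : ℕ) (x : Fin (m+1) → ℝ) (hinj : Function.Injective x)
    (hx : ∀ i j, x i + x j ≠ 0) (j : Fin (m+1)) :
    ∏ a : Fin m, ∏ b ∈ Ioi a,
        (x (j.succAbove a) - x (j.succAbove b))/(x (j.succAbove a) + x (j.succAbove b))
      = (-1:ℝ)^(j:ℕ) * (∏ i, ∏ k ∈ Ioi i, (x i - x k)/(x i + x k)) *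
          ∏ i ∈ univ.erase j, ((x j + x i)/(x j - x i)) := by
  have hsub : ∀ a b : Fin (m+1), a ≠ b → x a - x b ≠ 0 :=
    fun a b h => sub_ne_zero.mpr (fun e => h (hinj e))
  have hsplit := prod_Ioi_split m j (fun i k => (x i - x k)/(x i + x k))
  have hB : ∏ i ∈ Iio j, (x i - x j)/(x i + x j)
      = (-1:ℝ)^(j:ℕ) * ∏ i ∈ Iio j, (x j - x i)/(x j + x i) := by
    calc ∏ i ∈ Iio j, (x i - x j)/(x i + x j)
        = ∏ i ∈ Iio j, (-1) * ((x j - x i)/(x j + x i)) := by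
          refine Finset.prod_congr rfl fun i _ => ?_
          rw [add_comm (x i) (x j)]
          ring
      _ = (-1:ℝ)^(j:ℕ) * ∏ i ∈ Iio j, (x j - x i)/(x j + x i) := by
          rw [Finset.prod_mul_distrib, Finset.prod_const, Fin.card_Iio]
  have herase : univ.erase j = Iio j ∪ Ioi j := by
    ext i
    simp only [Finset.mem_erase, mem_univ, and_true, Finset.mem_union, mem_Iio, mem_Ioi]
    constructor
    · intro h; exact lt_or_gt_of_ne h
    · rintro (h | h)
      · exact ne_of_lt h
      · exact ne_of_gt h
  have hdisj : Disjoint (Iio j) (Ioi j) := by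
    rw [Finset.disjoint_left]
    intro a ha hb
    rw [mem_Iio] at ha
    rw [mem_Ioi] at hb
    exact absurd (ha.trans hb) (lt_irrefl _)
  have hD : ∏ i ∈ univ.erase j, (x j - x i)/(x j + x i)
      = (∏ i ∈ Iio j, (x j - x i)/(x j + x i)) * ∏ i ∈ Ioi j, (x j - x i)/(x j + x i) := by
    rw [herase, Finset.prod_union hdisj]
  have hDne : (∏ i ∈ univ.erase j, (x j - x i)/(x j + x i)) ≠ 0 :=
    Finset.prod_ne_zero_iff.mpr fun i hi =>
      div_ne_zero (hsub j i (Finset.ne_of_mem_erase hi).symm) (hx j i)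
  have hInv : ∏ i ∈ univ.erase j, ((x j + x i)/(x j - x i))
      = (∏ i ∈ univ.erase j, (x j - x i)/(x j + x i))⁻¹ := by
    rw [← Finset.prod_inv_distrib]
    exact Finset.prod_congr rfl fun i _ => (inv_div _ _).symm
  have hsq : ((-1:ℝ)^(j:ℕ)) * ((-1:ℝ)^(j:ℕ)) = 1 := by
    rw [← pow_add]
    exact Even.neg_one_pow ⟨(j:ℕ), rfl⟩
  rw [hB] at hsplit
  rw [hInv]
  have h1 : (∏ a : Fin m, ∏ b ∈ Ioi a,
      (x (j.succAbove a) - x (j.succAbove b))/(x (j.succAbove a) + x (j.succAbove b)))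
      * ((-1:ℝ)^(j:ℕ) * ∏ i ∈ univ.erase j, (x j - x i)/(x j + x i)) =
      ∏ i, ∏ k ∈ Ioi i, (x i - x k)/(x i + x k) := by
    rw [hsplit, hD]
    ring
  set A := ∏ a : Fin m, ∏ b ∈ Ioi a,
      (x (j.succAbove a) - x (j.succAbove b))/(x (j.succAbove a) + x (j.succAbove b)) with hA
  set D := ∏ i ∈ univ.erase j, (x j - x i)/(x j + x i) with hDd
  set P := ∏ i, ∏ k ∈ Ioi i, (x i - x k)/(x i + x k) with hP
  have hone : (((-1:ℝ)^(j:ℕ) * D) * ((-1:ℝ)^(j:ℕ) * D⁻¹)) = 1 := by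
    rw [mul_mul_mul_comm, hsq, one_mul, mul_inv_cancel₀ hDne]
  calc A = A * (((-1:ℝ)^(j:ℕ) * D) * ((-1:ℝ)^(j:ℕ) * D⁻¹)) := by rw [hone, mul_one]
    _ = (A * ((-1:ℝ)^(j:ℕ) * D)) * ((-1:ℝ)^(j:ℕ) * D⁻¹) := by ring
    _ = P * ((-1:ℝ)^(j:ℕ) * D⁻¹) := by rw [h1]
    _ = (-1:ℝ)^(j:ℕ) * P * D⁻¹ := by ring

lemma schur_step (n : ℕ)
    (ih : ∀ (q : Fin (2*n) → ℝ), Function.Injective q → (∀ i j, q i + q j ≠ 0) →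
      pf ℝ (2*n) (fun i j => (q i - q j)/(q i + q j)) =
        ∏ i, ∏ j ∈ Ioi i, (q i - q j)/(q i + q j))
    (q : Fin (2*n+2) → ℝ) (hinj : Function.Injective q)
    (hsum : ∀ i j, q i + q j ≠ 0) :
    pf ℝ (2*n+2) (fun i j => (q i - q j)/(q i + q j)) =
      ∏ i, ∏ j ∈ Ioi i, (q i - q j)/(q i + q j) := by
  have hm : Odd (2*n+1) := ⟨n, by ring⟩
  have hxinj : Function.Injective (fun k : Fin (2*n+1) => q k.succ) :=
    fun a b h => Fin.succ_injective _ (hinj h)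
  have hxsum : ∀ i j : Fin (2*n+1), q i.succ + q j.succ ≠ 0 := fun i j => hsum _ _
  have h0 : ∀ j : Fin (2*n+1), q 0 + q j.succ ≠ 0 := fun j => hsum _ _
  erw [pf_two_step]
  have hterm : ∀ j : Fin (2*n+1),
      (-1:ℝ)^(j:ℕ) * ((q 0 - q j.succ)/(q 0 + q j.succ)) *
        pf ℝ (2*n) (fun a b => (q ((j.succAbove a).succ) - q ((j.succAbove b).succ)) /
          (q ((j.succAbove a).succ) + q ((j.succAbove b).succ)))
      = (∏ i : Fin (2*n+1), ∏ k ∈ Ioi i, (q i.succ - q k.succ)/(q i.succ + q k.succ)) *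
          ((q 0 - q j.succ)/(q 0 + q j.succ) *
            ∏ i ∈ univ.erase j, ((q j.succ + q i.succ)/(q j.succ - q i.succ))) := by
    intro j
    have hpinj : Function.Injective (fun a : Fin (2*n) => q ((j.succAbove a)).succ) :=
      fun a b h => Fin.succAbove_right_injective (Fin.succ_injective _ (hinj h))
    have hpsum : ∀ a b : Fin (2*n), q ((j.succAbove a)).succ + q ((j.succAbove b)).succ ≠ 0 :=
      fun a b => hsum _ _
    have hIH := ih (fun a => q ((j.succAbove a)).succ) hpinj hpsum
    beta_reduce at hIH
    have hAv := avoid_eq (2*n) (fun k => q k.succ) hxinj hxsum j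
    beta_reduce at hAv
    have hsq : ((-1:ℝ)^(j:ℕ)) * ((-1:ℝ)^(j:ℕ)) = 1 := by
      rw [← pow_add]
      exact Even.neg_one_pow ⟨(j:ℕ), rfl⟩
    rw [hIH, hAv]
    calc (-1:ℝ)^(j:ℕ) * ((q 0 - q j.succ)/(q 0 + q j.succ)) *
        ((-1:ℝ)^(j:ℕ) * (∏ i : Fin (2*n+1), ∏ k ∈ Ioi i,
            (q i.succ - q k.succ)/(q i.succ + q k.succ)) *
          ∏ i ∈ univ.erase j, ((q j.succ + q i.succ)/(q j.succ - q i.succ)))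
        = ((-1:ℝ)^(j:ℕ) * (-1:ℝ)^(j:ℕ)) *
            ((∏ i : Fin (2*n+1), ∏ k ∈ Ioi i, (q i.succ - q k.succ)/(q i.succ + q k.succ)) *
              ((q 0 - q j.succ)/(q 0 + q j.succ) *
                ∏ i ∈ univ.erase j, ((q j.succ + q i.succ)/(q j.succ - q i.succ)))) := by ring
      _ = _ := by rw [hsq, one_mul]
  rw [Finset.sum_congr rfl (fun j _ => hterm j), ← Finset.mul_sum]
  have hstar := star hm (fun k : Fin (2*n+1) => q k.succ) hxinj hxsum (q 0) h0
  beta_reduce at hstar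
  rw [hstar]
  have hRHS : (∏ i : Fin (2*n+2), ∏ j ∈ Ioi i, (q i - q j)/(q i + q j))
      = (∏ k : Fin (2*n+1), (q 0 - q k.succ)/(q 0 + q k.succ)) *
        ∏ i : Fin (2*n+1), ∏ k ∈ Ioi i, (q i.succ - q k.succ)/(q i.succ + q k.succ) := by
    rw [Fin.prod_univ_succ (f := fun i : Fin (2*n+2) => ∏ j ∈ Ioi i, (q i - q j)/(q i + q j))]
    rw [Fin.prod_Ioi_zero]
    congr 1
    refine Finset.prod_congr rfl fun i _ => ?_
    exact Fin.prod_Ioi_succ (a := i) (fun k => (q i.succ - q k)/(q i.succ + q k))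
  rw [hRHS]
  ring

lemma schur_main : ∀ (n : ℕ) (q : Fin (2*n) → ℝ), Function.Injective q →
    (∀ i j, q i + q j ≠ 0) →
    pf ℝ (2*n) (fun i j => (q i - q j)/(q i + q j)) =
      ∏ i, ∏ j ∈ Ioi i, (q i - q j)/(q i + q j) := by
  intro n
  induction n with
  | zero =>
    intro q _ _
    rw [show pf ℝ (2*0) (fun i j => (q i - q j)/(q i + q j)) = 1 from rfl]
    simp
  | succ n ih =>
    intro q hinj hsum
    exact schur_step n ih q hinj hsum

/-- Schur's Pfaffian identity: for an even number N = 2n of fields with distinct parameters,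
`Pf[(p_i - p_j)/(2(p_i + p_j))] = 2^{-N/2} Π_{i<j} (p_i - p_j)/(p_i + p_j)`
(the vacuum expectation value of a product of an even number of fermionic fields). -/
theorem wick_pfaffian (n : ℕ) (p : Fin (2*n) → ℝ) (hinj : Function.Injective p)
    (hsum : ∀ i j : Fin (2*n), p i + p j ≠ 0) :
    pf ℝ (2*n) (fun i j => (p i - p j) / (2 * (p i + p j))) =
      ((2:ℝ)^n)⁻¹ * ∏ i : Fin (2*n), ∏ j ∈ Finset.Ioi i, (p i - p j) / (p i + p j) := by
  have hc : ∀ i j : Fin (2*n), (p i - p j) / (2 * (p i + p j))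
      = (2:ℝ)⁻¹ * ((p i - p j)/(p i + p j)) := by
    intro i j
    have h := hsum i j
    field_simp
  have : (fun i j : Fin (2*n) => (p i - p j) / (2 * (p i + p j)))
      = fun i j => (2:ℝ)⁻¹ * ((p i - p j)/(p i + p j)) := by
    funext i j; exact hc i j
  rw [this]
  erw [pf_smul]
  rw [schur_main n p hinj hsum]
  congr 1
  rw [show (2*n)/2 = n by omega, inv_pow]
end

section
/- Pfaffian–Plücker relation: for odd p and odd r, and index sequences (i_1,...,i_p), (j_1,...,j_r), Σ_{k=1}^p (-1)^{k-1} Pf(i_1,...,î_k,...,i_p) Pf(i_k, j_1,...,j_r) = Σ_{s=1}^r (-1)^{s-1} Pf(i_1,...,i_p, j_s) Pf(j_1,...,ĵ_s,...,j_r), where Pf(S) denotes the Pfaffian of the principal submatrix on the indices S of a fixed skew-symmetric matrix, and hats denote omitted indices. -/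
open Matrix

section Aux
open Fin

lemma pf_def {R : Type*} [CommRing R] (N : ℕ) (A : Matrix (Fin (N+2)) (Fin (N+2)) R) :
    pf R (N+2) A = ∑ j : Fin (N+1), (-1 : R)^(j:ℕ) * A 0 j.succ *
      pf R N (fun a b => A ((j.succAbove a).succ) ((j.succAbove b).succ)) := by
  rw [pf]

lemma pf_odd {R : Type*} [CommRing R] : ∀ (N : ℕ), Odd N →
    ∀ (A : Matrix (Fin N) (Fin N) R), pf R N A = 0
  | 0, h, _ => absurd h (by decide)
  | 1, _, _ => rfl
  | (N+2), h, A => by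
    rw [pf_def]
    refine Finset.sum_eq_zero fun j _ => ?_
    obtain ⟨c, hc⟩ := h
    erw [pf_odd N ⟨c - 1, by omega⟩, mul_zero]

lemma sAsAp {n : ℕ} (p : Fin (n+2)) (q : Fin (n+1)) :
    (p.succAbove q).succAbove (q.predAbove p) = p := by
  rcases lt_or_ge (castSucc q) p with h | h
  · rw [succAbove_of_castSucc_lt _ _ h, predAbove_of_castSucc_lt _ _ h,
      succAbove_pred_of_lt _ _ h]
  · rw [succAbove_of_le_castSucc _ _ h, predAbove_of_le_castSucc _ _ h,
      succAbove_castPred_of_lt _ _ (lt_of_le_of_lt h (castSucc_lt_succ (i := q)))]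

lemma pApAs {n : ℕ} (p : Fin (n+2)) (q : Fin (n+1)) :
    (q.predAbove p).predAbove (p.succAbove q) = q := by
  rcases lt_or_ge (castSucc q) p with h | h
  · rw [succAbove_of_castSucc_lt _ _ h, predAbove_of_castSucc_lt _ _ h,
      predAbove_of_le_castSucc _ _ ?_, castPred_castSucc]
    · have h' : (q:ℕ) < (p:ℕ) := by simpa [Fin.lt_def] using h
      simp only [le_def, coe_castSucc, coe_pred]
      omega
  · rw [succAbove_of_le_castSucc _ _ h, predAbove_of_le_castSucc _ _ h,
      predAbove_of_castSucc_lt _ _ ?_, pred_succ]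
    · have h' : (p:ℕ) ≤ (q:ℕ) := by simpa [Fin.le_def] using h
      simp only [lt_def, coe_castSucc, coe_castPred, val_succ]
      omega

lemma succAbove_comp {n : ℕ} (p : Fin (n+2)) (q : Fin (n+1)) :
    p.succAbove ∘ q.succAbove = (p.succAbove q).succAbove ∘ (q.predAbove p).succAbove := by
  have h1 : StrictMono (p.succAbove ∘ q.succAbove) :=
    (strictMono_succAbove p).comp (strictMono_succAbove q)
  have h2 : StrictMono ((p.succAbove q).succAbove ∘ (q.predAbove p).succAbove) :=
    (strictMono_succAbove _).comp (strictMono_succAbove _)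
  haveI : WellFoundedLT (Fin n) := inferInstance
  refine (StrictMono.range_inj h1 h2).mp ?_
  rw [Set.range_comp, Set.range_comp, range_succAbove, range_succAbove,
    Set.compl_eq_univ_diff ({q} : Set (Fin (n+1))),
    Set.compl_eq_univ_diff ({q.predAbove p} : Set (Fin (n+1))),
    Set.image_diff succAbove_right_injective, Set.image_diff succAbove_right_injective,
    Set.image_univ, Set.image_univ, range_succAbove, range_succAbove,
    Set.image_singleton, Set.image_singleton, sAsAp,
    Set.diff_eq, Set.diff_eq, Set.inter_comm]

lemma sign_eq {n : ℕ} (R : Type*) [CommRing R] (p : Fin (n+2)) (q : Fin (n+1)) :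
    ((-1 : R))^(((p.succAbove q) : ℕ) + ((q.predAbove p) : ℕ) + 1) = (-1)^((p:ℕ)+(q:ℕ)) := by
  rcases lt_or_ge (castSucc q) p with h | h
  · rw [succAbove_of_castSucc_lt _ _ h, predAbove_of_castSucc_lt _ _ h]
    simp only [lt_def, coe_castSucc] at h
    rw [coe_castSucc, coe_pred]
    congr 1
    omega
  · rw [succAbove_of_le_castSucc _ _ h, predAbove_of_le_castSucc _ _ h, val_succ, coe_castPred,
      show (q:ℕ) + 1 + (p:ℕ) + 1 = ((p:ℕ)+(q:ℕ)) + 2 by ring, pow_add]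
    simp

end Aux
section Exp
open Fin

lemma pf_expand_last {R : Type*} [CommRing R] :
    ∀ (N : ℕ) (M : Matrix (Fin (N+2)) (Fin (N+2)) R),
    pf R (N+2) M = ∑ k : Fin (N+1), (-1 : R)^(k:ℕ) *
      pf R N (fun a b => M (castSucc (k.succAbove a)) (castSucc (k.succAbove b))) *
      M k.castSucc (last (N+1))
  | 0, M => by
    simp [pf_def, pf, Fin.sum_univ_one]
  | 1, M => by
    rw [pf_odd 3 ⟨1, rfl⟩]
    simp [pf]
  | (N+2), M => by
    conv_lhs => rw [pf_def, Fin.sum_univ_castSucc]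
    conv_rhs => rw [Fin.sum_univ_succ]
    -- boundary terms
    have hbd : (-1 : R)^((last (N+2) : ℕ)) * M 0 (last (N+2)).succ *
        pf R (N+2) (fun a b => M (((last (N+2)).succAbove a).succ) (((last (N+2)).succAbove b).succ))
        = (-1 : R)^(((0 : Fin (N+3)) : ℕ)) *
          pf R (N+2) (fun a b =>
            M (castSucc ((0 : Fin (N+3)).succAbove a)) (castSucc ((0 : Fin (N+3)).succAbove b))) *
          M (castSucc (0 : Fin (N+3))) (last (N+3)) := by
      have hm : (fun (a b : Fin (N+2)) =>
            M (((last (N+2)).succAbove a).succ) (((last (N+2)).succAbove b).succ))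
          = (fun (a b : Fin (N+2)) =>
            M (castSucc ((0 : Fin (N+3)).succAbove a)) (castSucc ((0 : Fin (N+3)).succAbove b))) := by
        funext a b
        simp only [succAbove_last, succAbove_zero, succ_castSucc]
      rw [hm, succ_last, val_last, castSucc_zero, val_zero, pow_zero]
      rcases Nat.even_or_odd (N+2) with he | ho
      · rw [he.neg_one_pow]
        ring
      · erw [pf_odd (N+2) ho]
        ring
    rw [hbd]
    -- main double sums
    have hmain : (∑ j : Fin (N+2), (-1 : R)^((castSucc j : ℕ)) * M 0 (castSucc j).succ *
          pf R (N+2) (fun a b =>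
            M (((castSucc j).succAbove a).succ) (((castSucc j).succAbove b).succ)))
        = ∑ k : Fin (N+2), (-1 : R)^((succ k : Fin (N+3)) : ℕ) *
          pf R (N+2) (fun a b =>
            M (castSucc ((succ k).succAbove a)) (castSucc ((succ k).succAbove b))) *
          M (castSucc (succ k)) (last (N+3)) := by
      -- expand inner pfaffians
      have hL : ∀ j : Fin (N+2),
          pf R (N+2) (fun a b =>
            M (((castSucc j).succAbove a).succ) (((castSucc j).succAbove b).succ))
          = ∑ l : Fin (N+1), (-1 : R)^(l:ℕ) *
            pf R N (fun a b =>
              M (((castSucc j).succAbove (castSucc (l.succAbove a))).succ)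
                (((castSucc j).succAbove (castSucc (l.succAbove b))).succ)) *
            M (((castSucc j).succAbove (castSucc l)).succ) (last (N+3)) := by
        intro j
        erw [pf_expand_last N]
        refine Finset.sum_congr rfl fun l _ => ?_
        have hlast : ((castSucc j).succAbove (last (N+1))).succ = last (N+3) := by
          rw [succAbove_ne_last_last (Fin.ne_of_lt (castSucc_lt_last j)), succ_last]
        rw [hlast]
      have hR : ∀ k : Fin (N+2),
          pf R (N+2) (fun a b =>
            M (castSucc ((succ k).succAbove a)) (castSucc ((succ k).succAbove b)))
          = ∑ l : Fin (N+1), (-1 : R)^(l:ℕ) *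
            M 0 (castSucc ((succ k).succAbove (succ l))) *
            pf R N (fun a b =>
              M (castSucc ((succ k).succAbove ((l.succAbove a).succ)))
                (castSucc ((succ k).succAbove ((l.succAbove b).succ)))) := by
        intro k
        erw [pf_def]
        refine Finset.sum_congr rfl fun l _ => ?_
        have h0 : castSucc ((succ k).succAbove 0) = 0 := by simp
        rw [h0]
      simp only [hL, hR, Finset.mul_sum, Finset.sum_mul]
      rw [← Fintype.sum_prod_type', ← Fintype.sum_prod_type']
      refine Fintype.sum_equiv
        ⟨fun x => (x.1.succAbove x.2, x.2.predAbove x.1),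
         fun x => (x.1.succAbove x.2, x.2.predAbove x.1),
         fun x => Prod.ext (sAsAp x.1 x.2) (pApAs x.1 x.2),
         fun x => Prod.ext (sAsAp x.1 x.2) (pApAs x.1 x.2)⟩ _ _ ?_
      rintro ⟨j, l⟩
      simp only [Equiv.coe_fn_mk]
      set k : Fin (N+2) := j.succAbove l with hk
      set l' : Fin (N+1) := l.predAbove j with hl'
      have hkl : k.succAbove l' = j := sAsAp j l
      have hcomp : ∀ a : Fin N, j.succAbove (l.succAbove a) = k.succAbove (l'.succAbove a) :=
        fun a => congrFun (succAbove_comp j l) a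
      -- identify matrix entries
      have e1 : ((castSucc j).succAbove (castSucc l)).succ = castSucc (succ k) := by
        rw [castSucc_succAbove_castSucc, succ_castSucc, ← hk]
      have e2 : castSucc ((succ k).succAbove (succ l')) = (castSucc j).succ := by
        rw [succ_succAbove_succ, hkl, succ_castSucc]
      have e3 : (fun (a b : Fin N) =>
            M (((castSucc j).succAbove (castSucc (l.succAbove a))).succ)
              (((castSucc j).succAbove (castSucc (l.succAbove b))).succ))
          = (fun (a b : Fin N) =>
            M (castSucc ((succ k).succAbove ((l'.succAbove a).succ)))
              (castSucc ((succ k).succAbove ((l'.succAbove b).succ)))) := by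
        funext a b
        simp only [castSucc_succAbove_castSucc, succ_succAbove_succ, succ_castSucc, hcomp]
      rw [e1, e2, e3]
      have hsgn : ((-1 : R))^((k : ℕ) + (l' : ℕ) + 1) = (-1)^((j:ℕ)+(l:ℕ)) := sign_eq R j l
      rw [coe_castSucc, val_succ]
      linear_combination (-(M 0 (castSucc j).succ *
        (pf R N fun a b =>
          M (castSucc ((succ k).succAbove ((l'.succAbove a).succ)))
            (castSucc ((succ k).succAbove ((l'.succAbove b).succ)))) *
        M (castSucc (succ k)) (last (N+3)))) * hsgn
    rw [hmain]
    ring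
end Exp

/-- The Pfaffian–Plücker relation: for a fixed `2n × 2n` skew-symmetric matrix `A` over a
commutative ring and index sequences `(i_1, …, i_p)`, `(j_1, …, j_r)` with `p = 2a+1`,
`r = 2b+1` odd,
`Σ_{k=1}^p (-1)^{k-1} Pf(i_1,…,î_k,…,i_p) Pf(i_k, j_1,…,j_r)
  = Σ_{s=1}^r (-1)^{s-1} Pf(i_1,…,i_p, j_s) Pf(j_1,…,ĵ_s,…,j_r)`,
where `Pf(S)` is the Pfaffian of the principal submatrix of `A` on the indices `S` and
hats denote omitted indices. -/
theorem pfaffian_plucker {R : Type*} [CommRing R] (n a b : ℕ)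
    (A : Matrix (Fin (2*n)) (Fin (2*n)) R) (hA : Aᵀ = -A)
    (i : Fin (2*a+1) → Fin (2*n)) (j : Fin (2*b+1) → Fin (2*n)) :
    ∑ k : Fin (2*a+1), (-1 : R)^(k : ℕ) *
        pf R (2*a) (A.submatrix (i ∘ k.succAbove) (i ∘ k.succAbove)) *
        pf R (2*b+2) (A.submatrix (Fin.cons (i k) j) (Fin.cons (i k) j)) =
      ∑ s : Fin (2*b+1), (-1 : R)^(s : ℕ) *
        pf R (2*a+2) (A.submatrix (Fin.snoc i (j s)) (Fin.snoc i (j s))) *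
        pf R (2*b) (A.submatrix (j ∘ s.succAbove) (j ∘ s.succAbove)) := by
  have hcons : ∀ k : Fin (2*a+1),
      pf R (2*b+2) (A.submatrix (Fin.cons (i k) j) (Fin.cons (i k) j))
        = ∑ s : Fin (2*b+1), (-1:R)^(s:ℕ) * A (i k) (j s) *
            pf R (2*b) (A.submatrix (j ∘ s.succAbove) (j ∘ s.succAbove)) := by
    intro k
    rw [pf_def]
    refine Finset.sum_congr rfl fun s _ => ?_
    have h1 : A.submatrix (Fin.cons (i k) j) (Fin.cons (i k) j) 0 s.succ = A (i k) (j s) := by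
      simp
    have h2 : (fun x y => A.submatrix (Fin.cons (i k) j) (Fin.cons (i k) j)
          ((s.succAbove x).succ) ((s.succAbove y).succ))
        = A.submatrix (j ∘ s.succAbove) (j ∘ s.succAbove) := by
      funext x y
      simp
    rw [h1, h2]
  have hsnoc : ∀ s : Fin (2*b+1),
      pf R (2*a+2) (A.submatrix (Fin.snoc i (j s)) (Fin.snoc i (j s)))
        = ∑ k : Fin (2*a+1), (-1:R)^(k:ℕ) *
            pf R (2*a) (A.submatrix (i ∘ k.succAbove) (i ∘ k.succAbove)) * A (i k) (j s) := by
    intro s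
    rw [pf_expand_last (2*a)]
    refine Finset.sum_congr rfl fun k _ => ?_
    have h1 : (fun x y => A.submatrix (Fin.snoc i (j s)) (Fin.snoc i (j s))
          (Fin.castSucc (k.succAbove x)) (Fin.castSucc (k.succAbove y)))
        = A.submatrix (i ∘ k.succAbove) (i ∘ k.succAbove) := by
      funext x y
      simp
    have h2 : A.submatrix (Fin.snoc i (j s)) (Fin.snoc i (j s)) k.castSucc
        (Fin.last (2*a+1)) = A (i k) (j s) := by
      simp
    rw [h1, h2]
  simp only [hcons, hsnoc, Finset.mul_sum, Finset.sum_mul]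
  rw [Finset.sum_comm]
  refine Finset.sum_congr rfl fun s _ => Finset.sum_congr rfl fun k _ => by ring
end

section
/- Let W be an n×m matrix (n ≥ m, n + m even) such that the skew-symmetric matrix Ŵ = [[0, W], [-Wᵀ, 0]] has all principal Pfaffians nonnegative (totally nonnegative Pfaffian). If L is an n×n totally nonnegative matrix and R an m×m totally nonnegative matrix, then both [[0, LW], [-(LW)ᵀ, 0]] and [[0, WR], [-(WR)ᵀ, 0]] are totally nonnegative Pfaffians. -/
open Matrix

/-- A skew-symmetric real matrix is a *totally nonnegative Pfaffian* if every even-size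
principal submatrix has nonnegative Pfaffian. -/
noncomputable def IsTNNPfaffian {N : ℕ} (A : Matrix (Fin N) (Fin N) ℝ) : Prop :=
  ∀ α : Finset (Fin N), Even α.card →
    0 ≤ pf ℝ α.card (A.submatrix (α.orderEmbOfFin rfl) (α.orderEmbOfFin rfl))

/-- A real matrix is *totally nonnegative* if all its minors are nonnegative. -/
def IsTotallyNonneg {n m : ℕ} (L : Matrix (Fin n) (Fin m) ℝ) : Prop :=
  ∀ (k : ℕ) (f : Fin k → Fin n) (g : Fin k → Fin m), StrictMono f → StrictMono g →
    0 ≤ (L.submatrix f g).det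

/-- The `(n+m) × (n+m)` skew-symmetric matrix `[[0, V], [-Vᵀ, 0]]` built from an
`n × m` matrix `V`. -/
noncomputable def hatMat {n m : ℕ} (V : Matrix (Fin n) (Fin m) ℝ) :
    Matrix (Fin (n + m)) (Fin (n + m)) ℝ :=
  (Matrix.fromBlocks 0 V (-Vᵀ) 0).submatrix finSumFinEquiv.symm finSumFinEquiv.symm

section Aux

def hat' (a b N : ℕ) (h : a + b = N) (V : Matrix (Fin a) (Fin b) ℝ) :
    Matrix (Fin N) (Fin N) ℝ := fun i j =>
  if hi : (i : ℕ) < a then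
    (if hj : (j : ℕ) < a then 0 else V ⟨i, hi⟩ ⟨(j : ℕ) - a, by have := j.isLt; omega⟩)
  else
    (if hj : (j : ℕ) < a then -(V ⟨j, hj⟩ ⟨(i : ℕ) - a, by have := i.isLt; omega⟩) else 0)

lemma succAbove_val {n : ℕ} (c : Fin (n+1)) (q : Fin n) :
    ((c.succAbove q) : ℕ) = if (q : ℕ) < (c : ℕ) then (q : ℕ) else (q : ℕ) + 1 := by
  rw [Fin.succAbove]
  split_ifs with h1 h2 h2
  · rfl
  · exact absurd (by simpa [Fin.lt_def] using h1) h2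
  · exact absurd (by simpa [Fin.lt_def] using h2) h1
  · rfl

lemma hat'_zero (a b N : ℕ) (h : a + b = N) (V : Matrix (Fin a) (Fin b) ℝ)
    (i j : Fin N) (hij : ((i : ℕ) < a ↔ (j : ℕ) < a)) : hat' a b N h V i j = 0 := by
  unfold hat'
  split_ifs with h1 h2 h2 <;> first | rfl | omega

lemma hat'_minor (a' b' N' : ℕ) (h : (a'+1) + (b'+1) = N'+2) (h' : a' + b' = N')
    (V : Matrix (Fin (a'+1)) (Fin (b'+1)) ℝ) (j : Fin (N'+1)) (hj : a' ≤ (j : ℕ)) :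
    (fun p q => hat' (a'+1) (b'+1) (N'+2) h V ((j.succAbove p).succ) ((j.succAbove q).succ)) =
      hat' a' b' N' h' (V.submatrix Fin.succ
        (Fin.succAbove ⟨(j : ℕ) - a', by have := j.isLt; omega⟩)) := by
  funext p q
  have hp := p.isLt; have hq := q.isLt; have hjlt := j.isLt
  have hup : (((j.succAbove p).succ : Fin (N'+2)) : ℕ)
      = if (p : ℕ) < (j : ℕ) then (p : ℕ) + 1 else (p : ℕ) + 2 := by
    rw [Fin.val_succ, succAbove_val]; split_ifs <;> omega
  have huq : (((j.succAbove q).succ : Fin (N'+2)) : ℕ)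
      = if (q : ℕ) < (j : ℕ) then (q : ℕ) + 1 else (q : ℕ) + 2 := by
    rw [Fin.val_succ, succAbove_val]; split_ifs <;> omega
  rcases lt_or_ge (p : ℕ) (j : ℕ) with hpj | hpj <;>
    rcases lt_or_ge (q : ℕ) (j : ℕ) with hqj | hqj <;>
    [rw [if_pos hpj] at hup; rw [if_pos hpj] at hup; rw [if_neg (by omega)] at hup;
     rw [if_neg (by omega)] at hup] <;>
    [rw [if_pos hqj] at huq; rw [if_neg (by omega)] at huq; rw [if_pos hqj] at huq;
     rw [if_neg (by omega)] at huq] <;>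
  · unfold hat'
    simp only [submatrix_apply, hup, huq]
    split_ifs <;>
      first
      | rfl
      | omega
      | ((try rw [neg_inj]); congr 1 <;> apply Fin.ext <;>
          simp only [Fin.val_succ, succAbove_val, Fin.val_mk] <;> split_ifs <;> omega)

lemma hat'_app₂ (a b N : ℕ) (h : a + b = N) (V : Matrix (Fin a) (Fin b) ℝ)
    (i j : Fin N) (hi : (i : ℕ) < a) (hj : a ≤ (j : ℕ)) :
    hat' a b N h V i j = V ⟨i, hi⟩ ⟨(j : ℕ) - a, by have := j.isLt; omega⟩ := by
  unfold hat'
  rw [dif_pos hi, dif_neg (by omega)]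

lemma pf_hat'_ne : ∀ (N a b : ℕ) (h : a + b = N), a ≠ b →
    ∀ V : Matrix (Fin a) (Fin b) ℝ, pf ℝ N (hat' a b N h V) = 0 := by
  intro N
  induction N using Nat.strong_induction_on with
  | _ N IH =>
    match N with
    | 0 => intro a b h hab V; omega
    | 1 => intro a b h hab V; rw [pf]
    | (N'+2) =>
      intro a b h hab V
      rw [pf]
      apply Finset.sum_eq_zero
      intro j _
      match a, b with
      | 0, b =>
        rw [hat'_zero 0 b _ h V 0 j.succ (by omega)]; ring
      | a+1, 0 =>
        rw [hat'_zero (a+1) 0 _ h V 0 j.succ (by rw [Fin.val_zero]; omega)]; ring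
      | a'+1, b'+1 =>
        rcases lt_or_ge (j : ℕ) a' with hj | hj
        · rw [hat'_zero _ _ _ h V 0 j.succ (by rw [Fin.val_zero, Fin.val_succ]; omega)]; ring
        · rw [hat'_minor a' b' N' h (by omega) V j hj,
            IH N' (by omega) a' b' (by omega) (by omega)]
          ring

lemma pf_hat'_eq : ∀ (N k : ℕ) (h : k + k = N) (V : Matrix (Fin k) (Fin k) ℝ),
    pf ℝ N (hat' k k N h V) = (-1 : ℝ)^(k.choose 2) * V.det := by
  intro N
  induction N using Nat.strong_induction_on with
  | _ N IH =>
    match N with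
    | 0 =>
      intro k h V
      have hk : k = 0 := by omega
      subst hk
      simp [pf, det_fin_zero]
    | 1 => intro k h V; omega
    | (N'+2) =>
      intro k h V
      obtain ⟨k', rfl⟩ : ∃ k', k = k'+1 := ⟨k-1, by omega⟩
      rw [pf]
      have hzero : ∀ j : Fin (N'+1), j ∈ Finset.univ → ((-1 : ℝ)^(j:ℕ) * hat' (k'+1) (k'+1) (N'+2) h V 0 j.succ *
          pf ℝ N' (fun p q => hat' (k'+1) (k'+1) (N'+2) h V ((j.succAbove p).succ) ((j.succAbove q).succ))) ≠ 0
          → k' ≤ (j : ℕ) := by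
        intro j _ hne
        by_contra hlt
        apply hne
        rw [hat'_zero _ _ _ h V 0 j.succ (by rw [Fin.val_zero, Fin.val_succ]; omega)]
        ring
      rw [← Finset.sum_filter_of_ne hzero]
      rw [Finset.sum_nbij' (i := fun j : Fin (N'+1) => (⟨(j : ℕ) - k', by have := j.isLt; omega⟩ : Fin (k'+1)))
        (j := fun t : Fin (k'+1) => (⟨k' + (t : ℕ), by have := t.isLt; omega⟩ : Fin (N'+1)))
        (t := Finset.univ)
        (g := fun t : Fin (k'+1) => (-1 : ℝ)^(k' + (t : ℕ)) * V 0 t *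
          ((-1 : ℝ)^(k'.choose 2) * (V.submatrix Fin.succ t.succAbove).det))
        (hi := fun _ _ => Finset.mem_univ _)
        (hj := fun t _ => by simp)
        (left_neg := by intro j hj; simp only [Finset.mem_filter] at hj; apply Fin.ext; simp only [Fin.val_mk]; omega)
        (right_neg := by intro t _; apply Fin.ext; simp only [Fin.val_mk]; omega)
        ?_]
      · rw [det_succ_row_zero (A := V), Finset.mul_sum]
        apply Finset.sum_congr rfl
        intro t _
        have : (k'+1).choose 2 = k'.choose 1 + k'.choose 2 := Nat.choose_succ_succ k' 1
        rw [this, Nat.choose_one_right, pow_add, pow_add]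
        ring
      · intro j hjmem
        simp only [Finset.mem_filter] at hjmem
        obtain ⟨-, hj⟩ := hjmem
        rw [hat'_app₂ _ _ _ h V 0 j.succ (by rw [Fin.val_zero]; omega) (by rw [Fin.val_succ]; omega),
          hat'_minor k' k' N' h (by omega) V j hj,
          IH N' (by omega) k' (by omega)]
        beta_reduce
        simp only [Fin.val_mk, Fin.val_zero, Fin.val_succ]
        have e3 : k' + ((j:ℕ) - k') = (j:ℕ) := by omega
        have e1 : ∀ hp : (0:ℕ) < k'+1, (⟨0, hp⟩ : Fin (k'+1)) = 0 := fun _ => rfl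
        have e2 : ∀ hp : (j:ℕ)+1 - (k'+1) < k'+1, (⟨(j:ℕ)+1 - (k'+1), hp⟩ : Fin (k'+1))
            = ⟨(j:ℕ) - k', by have := j.isLt; omega⟩ :=
          fun _ => Fin.ext (by simp only [Fin.val_mk]; omega)
        rw [e3, e1, e2]

lemma det_mul_expand (k n : ℕ) (A : Matrix (Fin k) (Fin n) ℝ) (B : Matrix (Fin n) (Fin k) ℝ) :
    (A * B).det = ∑ φ : Fin k → Fin n, (∏ i, A i (φ i)) * (B.submatrix φ id).det := by
  have h1 : (A * B) = Matrix.of (fun i => ∑ j : Fin n, A i j • B j) := by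
    ext i l
    simp [Matrix.mul_apply, Finset.sum_apply]
  rw [h1]
  have h2 : ∀ M : Matrix (Fin k) (Fin k) ℝ, M.det = Matrix.detRowAlternating.toMultilinearMap M :=
    fun _ => rfl
  rw [h2]
  rw [show (Matrix.of (fun i => ∑ j : Fin n, A i j • B j) : Matrix (Fin k) (Fin k) ℝ)
      = (fun i => ∑ j : Fin n, A i j • B j) from rfl]
  rw [MultilinearMap.map_sum]
  apply Finset.sum_congr rfl
  intro φ _
  rw [show (fun i => A i (φ i) • B (φ i)) = (fun i => (fun i => A i (φ i)) i • (fun i => B (φ i)) i) from rfl]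
  rw [MultilinearMap.map_smul_univ]
  rw [smul_eq_mul]
  congr 1

lemma cb_nonneg (k n : ℕ) (c : ℝ) (A : Matrix (Fin k) (Fin n) ℝ) (B : Matrix (Fin n) (Fin k) ℝ)
    (h : ∀ e : Fin k → Fin n, StrictMono e →
      0 ≤ c * ((A.submatrix id e).det * (B.submatrix e id).det)) :
    0 ≤ c * (A * B).det := by
  rw [det_mul_expand, Finset.mul_sum]
  have hinj : ∀ φ : Fin k → Fin n, φ ∈ Finset.univ →
      c * ((∏ i, A i (φ i)) * (B.submatrix φ id).det) ≠ 0 → Function.Injective φ := by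
    intro φ _ hne
    by_contra hni
    apply hne
    rw [Function.not_injective_iff] at hni
    obtain ⟨a, b, hab, hne'⟩ := hni
    rw [Matrix.det_zero_of_row_eq hne' (by funext l; simp [hab])]
    ring
  rw [← Finset.sum_filter_of_ne hinj]
  rw [← Finset.sum_fiberwise_of_maps_to (g := fun φ : Fin k → Fin n => Finset.univ.image φ)
    (t := Finset.univ) (fun _ _ => Finset.mem_univ _)]
  apply Finset.sum_nonneg
  intro γ _
  rcases Finset.eq_empty_or_nonempty ((Finset.univ.filter (Function.Injective ·)).filter
      (fun φ : Fin k → Fin n => Finset.univ.image φ = γ)) with hemp | ⟨ψ, hψ⟩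
  · rw [hemp, Finset.sum_empty]
  · simp only [Finset.mem_filter, Finset.mem_univ, true_and] at hψ
    obtain ⟨hψinj, hψim⟩ := hψ
    have hγ : γ.card = k := by
      rw [← hψim, Finset.card_image_of_injective _ hψinj, Finset.card_univ, Fintype.card_fin]
    set e : Fin k → Fin n := ⇑(γ.orderEmbOfFin hγ) with he
    have himuniv : Finset.univ.image e = γ := by
      ext x
      simp only [Finset.mem_image, Finset.mem_univ, true_and]
      constructor
      · rintro ⟨i, rfl⟩; exact Finset.orderEmbOfFin_mem γ hγ i
      · intro hx
        have : x ∈ Set.range (γ.orderEmbOfFin hγ) := by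
          rw [Finset.range_orderEmbOfFin]; exact hx
        obtain ⟨i, hi⟩ := this
        exact ⟨i, hi⟩
    have key : ∑ φ ∈ ((Finset.univ.filter (Function.Injective ·)).filter
          (fun φ : Fin k → Fin n => Finset.univ.image φ = γ)),
        c * ((∏ i, A i (φ i)) * (B.submatrix φ id).det)
        = ∑ σ : Equiv.Perm (Fin k),
        c * ((∏ i, A i (e (σ i))) * ((B.submatrix (e ∘ σ) id)).det) := by
      apply Finset.sum_bij'
        (i := fun φ hφ => Equiv.ofBijective
          (fun i => (γ.orderIsoOfFin hγ).symm ⟨φ i, by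
            have := (Finset.mem_filter.mp hφ).2
            rw [← this]
            exact Finset.mem_image_of_mem _ (Finset.mem_univ i)⟩)
          (Finite.injective_iff_bijective.mp (by
            intro x y hxy
            have h2 := (Finset.mem_filter.mp (Finset.mem_filter.mp hφ).1).2
            apply h2
            have := congrArg (fun z => ((γ.orderIsoOfFin hγ) z : Fin n)) hxy
            simpa using this)))
        (j := fun σ _ => e ∘ σ)
        (hi := fun _ _ => Finset.mem_univ _)
        (hj := ?_) (left_neg := ?_) (right_neg := ?_) (h := ?_)
      · intro σ _
        simp only [Finset.mem_filter, Finset.mem_univ, true_and]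
        constructor
        · exact (γ.orderEmbOfFin hγ).injective.comp σ.injective
        · rw [← Finset.image_image, Finset.image_univ_equiv]
          exact himuniv
      · intro φ hφ
        funext i
        simp only [Function.comp_apply, Equiv.ofBijective_apply]
        rw [he]
        rw [← Finset.coe_orderIsoOfFin_apply]
        simp
      · intro σ _
        ext i
        simp only [Equiv.ofBijective_apply, Function.comp_apply]
        have hxy : (γ.orderIsoOfFin hγ) (σ i) = ⟨e (σ i), by
            rw [← himuniv]; exact Finset.mem_image_of_mem _ (Finset.mem_univ (σ i))⟩ :=
          Subtype.ext (by rw [Finset.coe_orderIsoOfFin_apply])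
        rw [← hxy]
        simp
      · intro φ hφ
        have hle : e ∘ (fun i => (γ.orderIsoOfFin hγ).symm ⟨φ i, by
            have := (Finset.mem_filter.mp hφ).2
            rw [← this]
            exact Finset.mem_image_of_mem _ (Finset.mem_univ i)⟩) = φ := by
          funext i
          simp only [Function.comp_apply]
          rw [he, ← Finset.coe_orderIsoOfFin_apply]
          simp
        conv_lhs => rw [← hle]
        rfl
    rw [key]
    have step : ∀ σ : Equiv.Perm (Fin k),
        (B.submatrix (e ∘ σ) id).det = (Equiv.Perm.sign σ : ℝ) * (B.submatrix e id).det := by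
      intro σ
      have : B.submatrix (e ∘ σ) id = (B.submatrix e id).submatrix σ id := by
        ext i j; simp
      rw [this, Matrix.det_permute]
    have step2 : ∑ σ : Equiv.Perm (Fin k),
        c * ((∏ i, A i (e (σ i))) * ((B.submatrix (e ∘ σ) id)).det)
        = c * ((A.submatrix id e).det * (B.submatrix e id).det) := by
      rw [← Matrix.det_transpose (A.submatrix id e), Matrix.det_apply']
      rw [Finset.sum_mul, Finset.mul_sum]
      apply Finset.sum_congr rfl
      intro σ _
      rw [step σ]
      have : ∏ i, (A.submatrix id e)ᵀ (σ i) i = ∏ i, A i (e (σ i)) := by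
        apply Finset.prod_congr rfl
        intro i _
        simp
      rw [this]
      ring
    rw [step2]
    exact h e (γ.orderEmbOfFin hγ).strictMono

variable {n m : ℕ}

def pA (α : Finset (Fin (n+m))) : Finset (Fin n) :=
  Finset.univ.filter (fun i => Fin.castAdd m i ∈ α)

def pB (α : Finset (Fin (n+m))) : Finset (Fin m) :=
  Finset.univ.filter (fun j => Fin.natAdd n j ∈ α)

lemma card_split (α : Finset (Fin (n+m))) : (pA α).card + (pB α).card = α.card := by
  classical
  have hdecomp : α = ((pA α).map ⟨Fin.castAdd m, fun x y hxy => Fin.ext (by simpa using congrArg Fin.val hxy)⟩)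
      ∪ ((pB α).map ⟨Fin.natAdd n, fun x y hxy => by
          have h2 := congrArg Fin.val hxy
          simp only [Fin.coe_natAdd] at h2
          exact Fin.ext (by omega)⟩) := by
    ext x
    simp only [Finset.mem_union, Finset.mem_map, Function.Embedding.coeFn_mk,
      pA, pB, Finset.mem_filter, Finset.mem_univ, true_and]
    constructor
    · intro hx
      rcases lt_or_ge (x : ℕ) n with hlt | hge
      · left
        refine ⟨⟨x, hlt⟩, ?_, Fin.ext rfl⟩
        have hxx : Fin.castAdd m ⟨(x:ℕ), hlt⟩ = x := Fin.ext rfl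
        rwa [hxx]
      · right
        have hxm : (x : ℕ) - n < m := by have := x.isLt; omega
        refine ⟨⟨(x : ℕ) - n, hxm⟩, ?_, Fin.ext (by show n + ((x : ℕ) - n) = x; omega)⟩
        have hxx : Fin.natAdd n ⟨(x:ℕ) - n, hxm⟩ = x := Fin.ext (by simp [Fin.coe_natAdd]; omega)
        rwa [hxx]
    · rintro (⟨i, hi, rfl⟩ | ⟨j, hj, rfl⟩)
      · exact hi
      · exact hj
  conv_rhs => rw [hdecomp]
  rw [Finset.card_union_of_disjoint, Finset.card_map, Finset.card_map]
  rw [Finset.disjoint_left]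
  rintro x hx1 hx2
  simp only [Finset.mem_map, Function.Embedding.coeFn_mk] at hx1 hx2
  obtain ⟨i, -, rfl⟩ := hx1
  obtain ⟨j, -, hj⟩ := hx2
  have := congrArg Fin.val hj
  change n + (j : ℕ) = (i : ℕ) at this
  have := i.isLt
  omega

lemma hat_submatrix (V : Matrix (Fin n) (Fin m) ℝ) (α : Finset (Fin (n+m))) :
    (hatMat V).submatrix (α.orderEmbOfFin rfl) (α.orderEmbOfFin rfl)
    = hat' (pA α).card (pB α).card α.card (card_split α)
        (V.submatrix ((pA α).orderEmbOfFin rfl) ((pB α).orderEmbOfFin rfl)) := by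
  classical
  set a := (pA α).card with ha
  set b := (pB α).card with hb
  set f := (pA α).orderEmbOfFin rfl with hf
  set g := (pB α).orderEmbOfFin rfl with hg
  have hcs : a + b = α.card := card_split α
  set F : Fin α.card → Fin (n+m) := fun i =>
    if hi : (i : ℕ) < a then Fin.castAdd m (f ⟨i, hi⟩)
    else Fin.natAdd n (g ⟨(i : ℕ) - a, by have := i.isLt; omega⟩) with hF
  have hmem : ∀ i, F i ∈ α := by
    intro i
    rw [hF]
    beta_reduce
    split_ifs with hi
    · have h2 := Finset.orderEmbOfFin_mem (pA α) rfl ⟨(i : ℕ), hi⟩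
      unfold pA at h2; rw [Finset.mem_filter] at h2
      exact h2.2
    · have h2 := Finset.orderEmbOfFin_mem (pB α) rfl ⟨(i : ℕ) - a, by have := i.isLt; omega⟩
      unfold pB at h2; rw [Finset.mem_filter] at h2
      exact h2.2
  have hmono : StrictMono F := by
    intro x y hxy
    rw [hF]
    beta_reduce
    have hfx := fun (hx : (x:ℕ) < a) (hy : (y:ℕ) < a) =>
      f.strictMono (show (⟨(x:ℕ), hx⟩ : Fin a) < ⟨(y:ℕ), hy⟩ from hxy)
    split_ifs with hx hy hy
    · simp only [Fin.lt_def, Fin.coe_castAdd]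
      exact hfx hx hy
    · simp only [Fin.lt_def, Fin.coe_castAdd, Fin.coe_natAdd]
      have := (f ⟨(x:ℕ), hx⟩).isLt
      omega
    · exfalso
      have hxy' : (x:ℕ) < (y:ℕ) := hxy
      omega
    · simp only [Fin.lt_def, Fin.coe_natAdd]
      have := g.strictMono (show (⟨(x:ℕ) - a, by have := x.isLt; omega⟩ : Fin b)
        < ⟨(y:ℕ) - a, by have := y.isLt; omega⟩ from by
          simp only [Fin.lt_def]
          have hxy' : (x:ℕ) < (y:ℕ) := hxy
          omega)
      omega
  have huniq : F = ⇑(α.orderEmbOfFin rfl) := Finset.orderEmbOfFin_unique rfl hmem hmono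
  funext i j
  rw [Matrix.submatrix_apply, ← huniq, hF]
  unfold hatMat hat'
  simp only [Matrix.submatrix_apply]
  split_ifs with hi hj hj <;>
    simp [finSumFinEquiv_symm_apply_castAdd, finSumFinEquiv_symm_apply_natAdd] <;> rfl

lemma pf_hat'_eq' (N a b : ℕ) (h : a + b = N) (hab : a = b) (V : Matrix (Fin a) (Fin b) ℝ) :
    pf ℝ N (hat' a b N h V) = (-1 : ℝ)^(a.choose 2) * (V.submatrix id (Fin.cast hab)).det := by
  subst hab
  have hV : V.submatrix id (Fin.cast rfl) = V := by funext i j; rfl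
  rw [hV]
  exact pf_hat'_eq N a h V

lemma master (V : Matrix (Fin n) (Fin m) ℝ) (hV : IsTNNPfaffian (hatMat V))
    (k : ℕ) (u : Fin k → Fin n) (v : Fin k → Fin m) (hu : StrictMono u) (hv : StrictMono v) :
    0 ≤ (-1 : ℝ)^(k.choose 2) * (V.submatrix u v).det := by
  classical
  set α : Finset (Fin (n+m)) := (Finset.univ.image (fun i => Fin.castAdd m (u i))) ∪
    (Finset.univ.image (fun i => Fin.natAdd n (v i))) with hα
  have hpA : pA α = Finset.univ.image u := by
    ext x
    unfold pA
    rw [Finset.mem_filter]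
    simp only [Finset.mem_univ, true_and]
    rw [hα, Finset.mem_union]
    constructor
    · rintro (h | h)
      · rw [Finset.mem_image] at h
        obtain ⟨i, -, hi⟩ := h
        have hux : u i = x := Fin.ext (by simpa using congrArg Fin.val hi)
        rw [← hux]
        exact Finset.mem_image_of_mem _ (Finset.mem_univ i)
      · exfalso
        rw [Finset.mem_image] at h
        obtain ⟨i, -, hi⟩ := h
        have h2 := congrArg Fin.val hi
        simp only [Fin.coe_natAdd, Fin.coe_castAdd] at h2
        have := x.isLt
        omega
    · intro h
      rw [Finset.mem_image] at h
      obtain ⟨i, -, rfl⟩ := h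
      exact Or.inl (Finset.mem_image_of_mem _ (Finset.mem_univ i))
  have hpB : pB α = Finset.univ.image v := by
    ext x
    unfold pB
    rw [Finset.mem_filter]
    simp only [Finset.mem_univ, true_and]
    rw [hα, Finset.mem_union]
    constructor
    · rintro (h | h)
      · exfalso
        rw [Finset.mem_image] at h
        obtain ⟨i, -, hi⟩ := h
        have h2 := congrArg Fin.val hi
        simp only [Fin.coe_natAdd, Fin.coe_castAdd] at h2
        have := (u i).isLt
        omega
      · rw [Finset.mem_image] at h
        obtain ⟨i, -, hi⟩ := h
        have h2 := congrArg Fin.val hi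
        simp only [Fin.coe_natAdd] at h2
        have hvx : v i = x := Fin.ext (by omega)
        rw [← hvx]
        exact Finset.mem_image_of_mem _ (Finset.mem_univ i)
    · intro h
      rw [Finset.mem_image] at h
      obtain ⟨i, -, rfl⟩ := h
      exact Or.inr (Finset.mem_image_of_mem _ (Finset.mem_univ i))
  have hcA : (pA α).card = k := by
    rw [hpA, Finset.card_image_of_injective _ hu.injective, Finset.card_univ, Fintype.card_fin]
  have hcB : (pB α).card = k := by
    rw [hpB, Finset.card_image_of_injective _ hv.injective, Finset.card_univ, Fintype.card_fin]
  have heven : Even α.card := by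
    rw [← card_split α, hcA, hcB]
    exact ⟨k, rfl⟩
  have h0 := hV α heven
  rw [hat_submatrix, pf_hat'_eq' α.card _ _ (card_split α) (hcA.trans hcB.symm)] at h0
  have hfu : (fun i : Fin (pA α).card => u (Fin.cast hcA i)) = ⇑((pA α).orderEmbOfFin rfl) := by
    have hall : ∀ y : Fin k, u y ∈ pA α := by
      intro y
      rw [hpA]
      exact Finset.mem_image_of_mem _ (Finset.mem_univ y)
    apply Finset.orderEmbOfFin_unique
    · intro x
      exact hall _
    · intro x y hxy
      exact hu (show Fin.cast hcA x < Fin.cast hcA y from hxy)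
  have hgv : (fun i : Fin (pB α).card => v (Fin.cast hcB i)) = ⇑((pB α).orderEmbOfFin rfl) := by
    have hall : ∀ y : Fin k, v y ∈ pB α := by
      intro y
      rw [hpB]
      exact Finset.mem_image_of_mem _ (Finset.mem_univ y)
    apply Finset.orderEmbOfFin_unique
    · intro x
      exact hall _
    · intro x y hxy
      exact hv (show Fin.cast hcB x < Fin.cast hcB y from hxy)
  rw [← hfu, ← hgv] at h0
  have hdet : ((V.submatrix (fun i : Fin (pA α).card => u (Fin.cast hcA i))
        (fun i : Fin (pB α).card => v (Fin.cast hcB i))).submatrix id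
        (Fin.cast (hcA.trans hcB.symm)))
      = (V.submatrix u v).submatrix (finCongr hcA) (finCongr hcA) := by
    funext i j
    rfl
  rw [hdet, Matrix.det_submatrix_equiv_self, hcA] at h0
  exact h0

lemma submatrix_mul_factor {p : ℕ} (X : Matrix (Fin n) (Fin m) ℝ) (Y : Matrix (Fin m) (Fin p) ℝ)
    {k l : ℕ} (r : Fin k → Fin n) (c : Fin l → Fin p) :
    (X * Y).submatrix r c = (X.submatrix r id) * (Y.submatrix id c) := by
  ext i j
  simp [Matrix.mul_apply]

end Aux

/-- If `Ŵ = [[0, W], [-Wᵀ, 0]]` is a totally nonnegative Pfaffian (`n ≥ m`, `n + m` even),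
and `L`, `R` are totally nonnegative square matrices of sizes `n`, `m`, then both
`[[0, LW], [-(LW)ᵀ, 0]]` and `[[0, WR], [-(WR)ᵀ, 0]]` are totally nonnegative Pfaffians. -/
theorem tnnPfaffian_mul (n m : ℕ) (hnm : m ≤ n) (hev : Even (n + m))
    (W : Matrix (Fin n) (Fin m) ℝ) (hW : IsTNNPfaffian (hatMat W))
    (L : Matrix (Fin n) (Fin n) ℝ) (hL : IsTotallyNonneg L)
    (R : Matrix (Fin m) (Fin m) ℝ) (hR : IsTotallyNonneg R) :
    IsTNNPfaffian (hatMat (L * W)) ∧ IsTNNPfaffian (hatMat (W * R)) := by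
  constructor
  · intro α hαeven
    by_cases hab : (pA α).card = (pB α).card
    · rw [hat_submatrix, pf_hat'_eq' α.card _ _ (card_split α) hab]
      rw [Matrix.submatrix_submatrix, submatrix_mul_factor]
      apply cb_nonneg
      intro e he
      have h1 : ((L.submatrix (⇑((pA α).orderEmbOfFin rfl) ∘ id) id).submatrix id e)
          = L.submatrix (⇑((pA α).orderEmbOfFin rfl)) e := by
        funext i j; rfl
      have h2 : ((W.submatrix id (⇑((pB α).orderEmbOfFin rfl) ∘ Fin.cast hab)).submatrix e id)
          = W.submatrix e (⇑((pB α).orderEmbOfFin rfl) ∘ Fin.cast hab) := by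
        funext i j; rfl
      rw [h1, h2]
      have hL' := hL (pA α).card (⇑((pA α).orderEmbOfFin rfl)) e
        ((pA α).orderEmbOfFin rfl).strictMono he
      have hW' := master W hW (pA α).card e (⇑((pB α).orderEmbOfFin rfl) ∘ Fin.cast hab) he
        (fun x y hxy => ((pB α).orderEmbOfFin rfl).strictMono
          (show Fin.cast hab x < Fin.cast hab y from hxy))
      calc (0:ℝ) ≤ (L.submatrix (⇑((pA α).orderEmbOfFin rfl)) e).det *
            ((-1:ℝ)^((pA α).card.choose 2) *
              (W.submatrix e (⇑((pB α).orderEmbOfFin rfl) ∘ Fin.cast hab)).det) :=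
          mul_nonneg hL' hW'
        _ = (-1:ℝ)^((pA α).card.choose 2) *
            ((L.submatrix (⇑((pA α).orderEmbOfFin rfl)) e).det *
              (W.submatrix e (⇑((pB α).orderEmbOfFin rfl) ∘ Fin.cast hab)).det) := by ring
    · rw [hat_submatrix, pf_hat'_ne α.card _ _ (card_split α) hab]
  · intro α hαeven
    by_cases hab : (pA α).card = (pB α).card
    · rw [hat_submatrix, pf_hat'_eq' α.card _ _ (card_split α) hab]
      rw [Matrix.submatrix_submatrix, submatrix_mul_factor]
      apply cb_nonneg
      intro e he
      have h1 : ((W.submatrix (⇑((pA α).orderEmbOfFin rfl) ∘ id) id).submatrix id e)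
          = W.submatrix (⇑((pA α).orderEmbOfFin rfl)) e := by
        funext i j; rfl
      have h2 : ((R.submatrix id (⇑((pB α).orderEmbOfFin rfl) ∘ Fin.cast hab)).submatrix e id)
          = R.submatrix e (⇑((pB α).orderEmbOfFin rfl) ∘ Fin.cast hab) := by
        funext i j; rfl
      rw [h1, h2]
      have hW' := master W hW (pA α).card (⇑((pA α).orderEmbOfFin rfl)) e
        ((pA α).orderEmbOfFin rfl).strictMono he
      have hR' := hR (pA α).card e (⇑((pB α).orderEmbOfFin rfl) ∘ Fin.cast hab) he
        (fun x y hxy => ((pB α).orderEmbOfFin rfl).strictMono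
          (show Fin.cast hab x < Fin.cast hab y from hxy))
      calc (0:ℝ) ≤ ((-1:ℝ)^((pA α).card.choose 2) *
              (W.submatrix (⇑((pA α).orderEmbOfFin rfl)) e).det) *
            (R.submatrix e (⇑((pB α).orderEmbOfFin rfl) ∘ Fin.cast hab)).det :=
          mul_nonneg hW' hR'
        _ = (-1:ℝ)^((pA α).card.choose 2) *
            ((W.submatrix (⇑((pA α).orderEmbOfFin rfl)) e).det *
              (R.submatrix e (⇑((pB α).orderEmbOfFin rfl) ∘ Fin.cast hab)).det) := by ring
    · rw [hat_submatrix, pf_hat'_ne α.card _ _ (card_split α) hab]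
end

section
/- Pfaffian of a congruence/factorization: if S is a 2r×m matrix with m > 2r and J is a 2r×2r skew-symmetric matrix, then for any even-size index set α ⊆ [m], Pf((SᵀJS)(α,α)) = Σ_{K ⊆ [2r], |K| = |α|} Pf(J(K,K)) · det(S(K, α)); in particular Pf((SᵀJS)(α,α)) = 0 whenever |α| > 2r. -/
open Matrix

namespace PfAux

def ins {N : ℕ} (j : Fin (N+1)) (a : Fin N) : Fin (N+2) := (j.succAbove a).succ

lemma pf_succ {R : Type*} [CommRing R] {N : ℕ} (A : Matrix (Fin (N+2)) (Fin (N+2)) R) :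
    pf R (N+2) A = ∑ j : Fin (N+1), (-1 : R)^(j:ℕ) * A 0 j.succ *
      pf R N (fun a b => A (ins j a) (ins j b)) := by
  rw [pf]; rfl

def unpair {p N : ℕ} (j : Fin (N+1)) : (Fin (N+2) → Fin p) ≃ Fin p × Fin p × (Fin N → Fin p) :=
  (Equiv.arrowCongr ((finSuccEquiv (N+1)).trans (Equiv.optionCongr (finSuccEquiv' j)))
      (Equiv.refl (Fin p))).trans
    (Equiv.piOptionEquivProd.trans
      (Equiv.prodCongr (Equiv.refl _) Equiv.piOptionEquivProd))

lemma unpair_symm_zero {p N : ℕ} (j : Fin (N+1)) (t : Fin p × Fin p × (Fin N → Fin p)) :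
    (unpair j).symm t 0 = t.1 := by
  simp [unpair, Equiv.piOptionEquivProd, Equiv.arrowCongr, Equiv.optionCongr]

lemma unpair_symm_succ {p N : ℕ} (j : Fin (N+1)) (t : Fin p × Fin p × (Fin N → Fin p)) :
    (unpair j).symm t j.succ = t.2.1 := by
  simp [unpair, Equiv.piOptionEquivProd, Equiv.arrowCongr, Equiv.optionCongr]

lemma unpair_symm_ins {p N : ℕ} (j : Fin (N+1)) (t : Fin p × Fin p × (Fin N → Fin p)) (a : Fin N) :
    (unpair j).symm t (ins j a) = t.2.2 a := by
  simp [unpair, ins, Equiv.piOptionEquivProd, Equiv.arrowCongr, Equiv.optionCongr]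

lemma key {R : Type*} [CommRing R] {p : ℕ} : ∀ (n : ℕ) (J : Matrix (Fin p) (Fin p) R)
    (T : Matrix (Fin p) (Fin n) R),
    pf R n (fun i j => ∑ k, ∑ l, T k i * J k l * T l j)
      = ∑ g : Fin n → Fin p, (∏ i, T (g i) i) * pf R n (fun a b => J (g a) (g b))
  | 0, J, T => by simp [pf]
  | 1, J, T => by simp [pf]
  | (N+2), J, T => by
    refine (pf_succ _).trans ?_
    have e1 : ∀ j : Fin (N+1),
        pf R N (fun a b => ∑ k, ∑ l, T k (ins j a) * J k l * T l (ins j b))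
          = ∑ g' : Fin N → Fin p, (∏ a, T (g' a) (ins j a)) *
              pf R N (fun a b => J (g' a) (g' b)) :=
      fun j => key N J (fun k a => T k (ins j a))
    have e2 : ∀ g : Fin (N+2) → Fin p, pf R (N+2) (fun a b => J (g a) (g b))
        = ∑ j : Fin (N+1), (-1:R)^(j:ℕ) * J (g 0) (g j.succ) *
            pf R N (fun a b => J (g (ins j a)) (g (ins j b))) :=
      fun g => pf_succ _
    have e3 : (∑ g : Fin (N+2) → Fin p, (∏ i, T (g i) i) *
          pf R (N+2) (fun a b => J (g a) (g b)))
        = ∑ j : Fin (N+1), ∑ g : Fin (N+2) → Fin p, (∏ i, T (g i) i) *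
            ((-1:R)^(j:ℕ) * J (g 0) (g j.succ) *
              pf R N (fun a b => J (g (ins j a)) (g (ins j b)))) := by
      rw [Finset.sum_comm]
      exact Finset.sum_congr rfl fun g _ => by rw [e2 g, Finset.mul_sum]
    rw [e3]
    refine Finset.sum_congr rfl fun j _ => ?_
    have e4 : ∀ j : Fin (N+1),
      (-1:R)^(j:ℕ) * ((fun i j => ∑ k, ∑ l, T k i * J k l * T l j) 0 j.succ) *
        pf R N (fun a b => (fun i j => ∑ k, ∑ l, T k i * J k l * T l j) (ins j a) (ins j b))
      = (-1:R)^(j:ℕ) * (∑ k, ∑ l, T k 0 * J k l * T l j.succ) *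
        (∑ g' : Fin N → Fin p, (∏ a, T (g' a) (ins j a)) * pf R N (fun a b => J (g' a) (g' b))) :=
      fun j => congrArg (fun x => (-1:R)^(j:ℕ) * (∑ k, ∑ l, T k 0 * J k l * T l j.succ) * x) (e1 j)
    rw [e4 j]
    rw [← Equiv.sum_comp (unpair j).symm (fun g => (∏ i, T (g i) i) *
          ((-1:R)^(j:ℕ) * J (g 0) (g j.succ) *
            pf R N (fun a b => J (g (ins j a)) (g (ins j b)))))]
    have e5 : ∀ t : Fin p × Fin p × (Fin N → Fin p),
        (∏ i, T ((unpair j).symm t i) i) *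
          ((-1:R)^(j:ℕ) * J ((unpair j).symm t 0) ((unpair j).symm t j.succ) *
            pf R N (fun a b => J ((unpair j).symm t (ins j a)) ((unpair j).symm t (ins j b))))
        = (-1:R)^(j:ℕ) * (T t.1 0 * J t.1 t.2.1 * T t.2.1 j.succ) *
            ((∏ a, T (t.2.2 a) (ins j a)) * pf R N (fun a b => J (t.2.2 a) (t.2.2 b))) := by
      intro t
      have hp : (∏ i, T ((unpair j).symm t i) i)
          = T t.1 0 * (T t.2.1 j.succ * ∏ a, T (t.2.2 a) (ins j a)) := by
        rw [Fin.prod_univ_succ, Fin.prod_univ_succAbove (fun i : Fin (N+1) =>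
          T ((unpair j).symm t i.succ) i.succ) j]
        rw [unpair_symm_zero]
        congr 1
        rw [unpair_symm_succ]
        congr 1
        exact Finset.prod_congr rfl fun a _ => by rw [show ((j.succAbove a).succ) = ins j a from rfl, unpair_symm_ins]
      have hm : pf R N (fun a b => J ((unpair j).symm t (ins j a)) ((unpair j).symm t (ins j b)))
          = pf R N (fun a b => J (t.2.2 a) (t.2.2 b)) := by
        congr 1
        ext a b
        rw [unpair_symm_ins, unpair_symm_ins]
      rw [hp, hm, unpair_symm_zero, unpair_symm_succ]
      ring
    calc (-1:R)^(j:ℕ) * (∑ k, ∑ l, T k 0 * J k l * T l j.succ) *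
        (∑ g' : Fin N → Fin p, (∏ a, T (g' a) (ins j a)) * pf R N (fun a b => J (g' a) (g' b)))
        = ∑ k, ∑ l, ∑ g' : Fin N → Fin p, (-1:R)^(j:ℕ) * (T k 0 * J k l * T l j.succ) *
            ((∏ a, T (g' a) (ins j a)) * pf R N (fun a b => J (g' a) (g' b))) := by
          have hSP : ∀ P : R, (∑ k, ∑ l, T k 0 * J k l * T l j.succ) * P
              = ∑ k, ∑ l, T k 0 * J k l * T l j.succ * P := fun P => by
            rw [Finset.sum_mul]
            exact Finset.sum_congr rfl fun k _ => Finset.sum_mul _ _ _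
          have hg : ∀ g' : Fin N → Fin p,
              ((-1:R)^(j:ℕ) * ∑ k, ∑ l, T k 0 * J k l * T l j.succ) *
                ((∏ a, T (g' a) (ins j a)) * pf R N (fun a b => J (g' a) (g' b)))
              = ∑ k, ∑ l, (-1:R)^(j:ℕ) * (T k 0 * J k l * T l j.succ) *
                  ((∏ a, T (g' a) (ins j a)) * pf R N (fun a b => J (g' a) (g' b))) := by
            intro g'
            set P := (∏ a, T (g' a) (ins j a)) * pf R N (fun a b => J (g' a) (g' b)) with hP
            calc ((-1:R)^(j:ℕ) * ∑ k, ∑ l, T k 0 * J k l * T l j.succ) * P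
                = (-1:R)^(j:ℕ) * ((∑ k, ∑ l, T k 0 * J k l * T l j.succ) * P) := by ring
              _ = (-1:R)^(j:ℕ) * ∑ k, ∑ l, T k 0 * J k l * T l j.succ * P := by rw [hSP P]
              _ = ∑ k, ∑ l, (-1:R)^(j:ℕ) * (T k 0 * J k l * T l j.succ) * P := by
                  rw [Finset.mul_sum]
                  refine Finset.sum_congr rfl fun k _ => ?_
                  rw [Finset.mul_sum]
                  exact Finset.sum_congr rfl fun l _ => by ring
          rw [Finset.mul_sum, Finset.sum_congr rfl (fun g' _ => hg g'), Finset.sum_comm]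
          exact Finset.sum_congr rfl fun k _ => Finset.sum_comm
      _ = ∑ t : Fin p × Fin p × (Fin N → Fin p),
            (-1:R)^(j:ℕ) * (T t.1 0 * J t.1 t.2.1 * T t.2.1 j.succ) *
            ((∏ a, T (t.2.2 a) (ins j a)) * pf R N (fun a b => J (t.2.2 a) (t.2.2 b))) := by
          rw [Fintype.sum_prod_type]
          exact Finset.sum_congr rfl fun k _ => by rw [Fintype.sum_prod_type]
      _ = _ := by
          exact Finset.sum_congr rfl fun t _ => (e5 t).symm


lemma ins_val {N : ℕ} (j : Fin (N+1)) (a : Fin N) :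
    (ins j a : ℕ) = if (a:ℕ) < (j:ℕ) then (a:ℕ)+1 else (a:ℕ)+2 := by
  unfold ins
  rcases lt_or_ge (a.castSucc) j with h | h
  · rw [Fin.succAbove_of_castSucc_lt _ _ h, Fin.val_succ, Fin.coe_castSucc,
      if_pos (by simpa [Fin.lt_iff_val_lt_val] using h)]
  · rw [Fin.succAbove_of_le_castSucc _ _ h, Fin.val_succ, Fin.val_succ,
      if_neg (by simpa [Fin.le_iff_val_le_val, not_lt] using h)]

lemma ins_strictMono {N : ℕ} (j : Fin (N+1)) : StrictMono (ins j) :=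
  fun a b h => Fin.succ_lt_succ_iff.2 (Fin.strictMono_succAbove j h)

lemma ins_injective {N : ℕ} (j : Fin (N+1)) : Function.Injective (ins j) :=
  (ins_strictMono j).injective

lemma ins_ne_zero {N : ℕ} (j : Fin (N+1)) (a : Fin N) : ins j a ≠ 0 := Fin.succ_ne_zero _

lemma exists_ins_eq {N : ℕ} (j : Fin (N+1)) {w : Fin (N+2)} (h0 : w ≠ 0) (hj : w ≠ j.succ) :
    ∃ a, ins j a = w := by
  obtain ⟨w', rfl⟩ := Fin.exists_succ_eq.2 h0
  obtain ⟨a, ha⟩ := Fin.exists_succAbove_eq (by simpa [Fin.succ_inj] using hj : w' ≠ j)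
  exact ⟨a, by simp [ins, ha]⟩

def invβ (M : ℕ) : Fin (M+2) × Fin (M+1) → Fin (M+2) × Fin (M+1) := fun t =>
  if _ : (t.2:ℕ) < (t.1:ℕ) then
    (⟨(t.2:ℕ), by have := t.2.isLt; omega⟩, ⟨(t.1:ℕ)-1, by have := t.1.isLt; omega⟩)
  else
    (⟨(t.2:ℕ)+1, by have := t.2.isLt; omega⟩, ⟨(t.1:ℕ), by have := t.2.isLt; omega⟩)

lemma invβ_invol (M : ℕ) : Function.Involutive (invβ M) := by
  intro t
  obtain ⟨k, j⟩ := t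
  unfold invβ
  dsimp only
  split_ifs with h1 h2 h2 <;>
    first
      | (exfalso; dsimp only at h2 ⊢; omega)
      | (apply Prod.ext <;> apply Fin.ext <;> dsimp only <;> omega)


lemma pf_zero {R : Type*} [CommRing R] (A : Matrix (Fin 0) (Fin 0) R) : pf R 0 A = 1 := by rw [pf]
lemma pf_one {R : Type*} [CommRing R] (A : Matrix (Fin 1) (Fin 1) R) : pf R 1 A = 0 := by rw [pf]


lemma flip1a (M : ℕ) (k : Fin (M+2)) (j₂ : Fin (M+1)) (h : (j₂:ℕ) < (k:ℕ)) :
    (⟨(j₂:ℕ), by have := j₂.isLt; omega⟩ : Fin (M+2)).succ.succ = ins k.succ j₂.succ := by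
  apply Fin.ext
  rw [ins_val]
  simp only [Fin.val_succ]
  split_ifs <;> omega

lemma flip1b (M : ℕ) (k : Fin (M+2)) (j₂ : Fin (M+1)) (h : (j₂:ℕ) < (k:ℕ)) :
    ins (⟨(j₂:ℕ), by have := j₂.isLt; omega⟩ : Fin (M+2)).succ
      (⟨(k:ℕ)-1, by have := k.isLt; omega⟩ : Fin (M+1)).succ = k.succ.succ := by
  apply Fin.ext
  rw [ins_val]
  simp only [Fin.val_succ]
  split_ifs <;> omega

lemma flip1c (M : ℕ) (k : Fin (M+2)) (j₂ : Fin (M+1)) (h : (j₂:ℕ) < (k:ℕ)) (a : Fin M) :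
    ins (⟨(j₂:ℕ), by have := j₂.isLt; omega⟩ : Fin (M+2)).succ
      (ins (⟨(k:ℕ)-1, by have := k.isLt; omega⟩ : Fin (M+1)) a) = ins k.succ (ins j₂ a) := by
  apply Fin.ext
  rw [ins_val, ins_val]
  simp only [Fin.val_succ, ins_val]
  split_ifs <;> omega

lemma flip2a (M : ℕ) (k : Fin (M+2)) (j₂ : Fin (M+1)) (h : ¬ (j₂:ℕ) < (k:ℕ)) :
    (⟨(j₂:ℕ)+1, by have := j₂.isLt; omega⟩ : Fin (M+2)).succ.succ = ins k.succ j₂.succ := by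
  apply Fin.ext
  rw [ins_val]
  simp only [Fin.val_succ]
  split_ifs <;> omega

lemma flip2b (M : ℕ) (k : Fin (M+2)) (j₂ : Fin (M+1)) (h : ¬ (j₂:ℕ) < (k:ℕ)) :
    ins (⟨(j₂:ℕ)+1, by have := j₂.isLt; omega⟩ : Fin (M+2)).succ
      (⟨(k:ℕ), by have := j₂.isLt; omega⟩ : Fin (M+1)).succ = k.succ.succ := by
  apply Fin.ext
  rw [ins_val]
  simp only [Fin.val_succ]
  split_ifs <;> omega

lemma flip2c (M : ℕ) (k : Fin (M+2)) (j₂ : Fin (M+1)) (h : ¬ (j₂:ℕ) < (k:ℕ)) (a : Fin M) :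
    ins (⟨(j₂:ℕ)+1, by have := j₂.isLt; omega⟩ : Fin (M+2)).succ
      (ins (⟨(k:ℕ), by have := j₂.isLt; omega⟩ : Fin (M+1)) a) = ins k.succ (ins j₂ a) := by
  apply Fin.ext
  rw [ins_val, ins_val]
  simp only [Fin.val_succ, ins_val]
  split_ifs <;> omega

set_option maxHeartbeats 2000000 in
lemma swap01 {R : Type*} [CommRing R] : ∀ (N : ℕ) (A : Matrix (Fin (N+2)) (Fin (N+2)) R),
    (∀ i j, A j i = -A i j) →
    pf R (N+2) (fun a b => A (Equiv.swap 0 1 a) (Equiv.swap 0 1 b)) = - pf R (N+2) A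
  | 0, A, hA => by
    have h : pf R 2 (fun a b => A (Equiv.swap 0 1 a) (Equiv.swap 0 1 b))
        = ∑ j : Fin 1, (-1:R)^(j:ℕ) * A (Equiv.swap 0 1 0) (Equiv.swap 0 1 j.succ) *
            pf R 0 (fun a b => A (Equiv.swap 0 1 (ins j a)) (Equiv.swap 0 1 (ins j b))) := pf_succ _
    have h2 : pf R 2 A = ∑ j : Fin 1, (-1:R)^(j:ℕ) * A 0 j.succ *
            pf R 0 (fun a b => A (ins j a) (ins j b)) := pf_succ _
    rw [h, h2]
    simp [pf_zero, Equiv.swap_apply_left, Equiv.swap_apply_right]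
    rw [hA 0 1, neg_mul]
    exact congrArg (fun x => -(A 0 1 * x)) ((pf_zero _).trans (pf_zero _).symm)
  | 1, A, hA => by
    have h : pf R 3 (fun a b => A (Equiv.swap 0 1 a) (Equiv.swap 0 1 b))
        = ∑ j : Fin 2, (-1:R)^(j:ℕ) * A (Equiv.swap 0 1 0) (Equiv.swap 0 1 j.succ) *
            pf R 1 (fun a b => A (Equiv.swap 0 1 (ins j a)) (Equiv.swap 0 1 (ins j b))) := pf_succ _
    have h2 : pf R 3 A = ∑ j : Fin 2, (-1:R)^(j:ℕ) * A 0 j.succ *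
            pf R 1 (fun a b => A (ins j a) (ins j b)) := pf_succ _
    rw [h, h2]
    simp [pf_one]
    change A 1 0 * 0 + -(A 1 (Equiv.swap 0 1 2) * 0) = A 0 2 * 0 + -(A 0 1 * 0)
    simp
  | (M+2), A, hA => by
    set τ := Equiv.swap (0 : Fin (M+4)) 1 with hτ
    have hfix : ∀ w : Fin (M+4), w ≠ 0 → w ≠ 1 → τ w = w :=
      fun w h0 h1 => Equiv.swap_apply_of_ne_of_ne h0 h1
    have hins1 : ∀ k : Fin (M+2), ins (k.succ) (0 : Fin (M+2)) = (1 : Fin (M+4)) := by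
      intro k
      apply Fin.ext
      rw [ins_val]
      simp
    -- second-level expansions (defeq instances of pf_succ)
    have hA2 : ∀ (k : Fin (M+2)),
        pf R (M+2) (fun a b => A (ins k.succ a) (ins k.succ b))
          = ∑ j₂ : Fin (M+1), (-1:R)^(j₂:ℕ) * A (ins k.succ 0) (ins k.succ j₂.succ) *
              pf R M (fun a b => A (ins k.succ (ins j₂ a)) (ins k.succ (ins j₂ b))) :=
      fun k => pf_succ _
    have hAe : pf R (M+4) A
        = A 0 1 * pf R (M+2) (fun a b => A (ins 0 a) (ins 0 b))
          + ∑ k : Fin (M+2), ∑ j₂ : Fin (M+1),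
              (-1:R)^((k:ℕ)+1+(j₂:ℕ)) * (A 0 k.succ.succ * A 1 (ins k.succ j₂.succ)) *
                pf R M (fun a b => A (ins k.succ (ins j₂ a)) (ins k.succ (ins j₂ b))) := by
      have h0 : pf R (M+4) A = ∑ j : Fin (M+3), (-1:R)^(j:ℕ) * A 0 j.succ *
          pf R (M+2) (fun a b => A (ins j a) (ins j b)) := pf_succ _
      rw [h0, Fin.sum_univ_succ]
      congr 1
      · simp
      · refine Finset.sum_congr rfl fun k _ => ?_
        rw [hA2 k, Finset.mul_sum]
        refine Finset.sum_congr rfl fun j₂ _ => ?_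
        rw [hins1 k, Fin.val_succ, pow_add]
        ring
    have hwfix : ∀ (k : Fin (M+2)) (j₂ : Fin (M+1)),
        τ (ins k.succ j₂.succ) = ins k.succ j₂.succ := by
      intro k j₂
      refine hfix _ (ins_ne_zero _ _) fun h => ?_
      exact Fin.succ_ne_zero j₂ (ins_injective k.succ (h.trans (hins1 k).symm))
    have hdeep : ∀ (k : Fin (M+2)) (j₂ : Fin (M+1)) (a : Fin M),
        τ (ins k.succ (ins j₂ a)) = ins k.succ (ins j₂ a) := by
      intro k j₂ a
      refine hfix _ (ins_ne_zero _ _) fun h => ?_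
      exact ins_ne_zero j₂ a (ins_injective k.succ (h.trans (hins1 k).symm))
    have hufix : ∀ k : Fin (M+2), τ (k.succ.succ) = k.succ.succ := by
      intro k
      refine hfix _ (Fin.succ_ne_zero _) fun h => ?_
      rw [show (1 : Fin (M+4)) = Fin.succ 0 from rfl, Fin.succ_inj] at h
      exact Fin.succ_ne_zero k h
    have hins0fix : ∀ a : Fin (M+2), τ (ins 0 a) = ins 0 a := by
      intro a
      refine hfix _ (ins_ne_zero _ _) fun h => ?_
      have := congrArg Fin.val h
      rw [ins_val] at this
      simp at this
    have hB2 : ∀ (k : Fin (M+2)),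
        pf R (M+2) (fun a b => A (τ (ins k.succ a)) (τ (ins k.succ b)))
          = ∑ j₂ : Fin (M+1), (-1:R)^(j₂:ℕ) * A (τ (ins k.succ 0)) (τ (ins k.succ j₂.succ)) *
              pf R M (fun a b => A (τ (ins k.succ (ins j₂ a))) (τ (ins k.succ (ins j₂ b)))) :=
      fun k => pf_succ _
    have hBe : pf R (M+4) (fun a b => A (τ a) (τ b))
        = -(A 0 1) * pf R (M+2) (fun a b => A (ins 0 a) (ins 0 b))
          + ∑ k : Fin (M+2), ∑ j₂ : Fin (M+1),
              (-1:R)^((k:ℕ)+1+(j₂:ℕ)) * (A 1 k.succ.succ * A 0 (ins k.succ j₂.succ)) *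
                pf R M (fun a b => A (ins k.succ (ins j₂ a)) (ins k.succ (ins j₂ b))) := by
      have h0 : pf R (M+4) (fun a b => A (τ a) (τ b)) = ∑ j : Fin (M+3),
          (-1:R)^(j:ℕ) * A (τ 0) (τ j.succ) *
            pf R (M+2) (fun a b => A (τ (ins j a)) (τ (ins j b))) := pf_succ _
      rw [h0, Fin.sum_univ_succ]
      congr 1
      · have hm : (fun (a b : Fin (M+2)) => A (τ (ins 0 a)) (τ (ins 0 b)))
            = (fun a b => A (ins 0 a) (ins 0 b)) := by
          funext a b
          rw [hins0fix, hins0fix]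
        rw [hm]
        have h01 : A (τ 0) (τ (Fin.succ (0 : Fin (M+3)))) = -(A 0 1) := by
          rw [show Fin.succ (0 : Fin (M+3)) = 1 from rfl, hτ, Equiv.swap_apply_left,
            Equiv.swap_apply_right]
          exact hA 0 1
        rw [h01]
        simp
      · refine Finset.sum_congr rfl fun k _ => ?_
        rw [hB2 k, Finset.mul_sum]
        refine Finset.sum_congr rfl fun j₂ _ => ?_
        have hm : (fun (a b : Fin M) => A (τ (ins k.succ (ins j₂ a))) (τ (ins k.succ (ins j₂ b))))
            = (fun a b => A (ins k.succ (ins j₂ a)) (ins k.succ (ins j₂ b))) := by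
          funext a b
          rw [hdeep, hdeep]
        rw [hm, hins1 k, hwfix k j₂]
        rw [show τ (Fin.succ k).succ = k.succ.succ from hufix k]
        rw [show τ 0 = 1 from Equiv.swap_apply_left _ _]
        rw [show τ 1 = 0 from Equiv.swap_apply_right _ _]
        rw [Fin.val_succ, pow_add]
        ring
    rw [hAe, hBe]
    have hflip : (∑ k : Fin (M+2), ∑ j₂ : Fin (M+1),
          (-1:R)^((k:ℕ)+1+(j₂:ℕ)) * (A 1 k.succ.succ * A 0 (ins k.succ j₂.succ)) *
            pf R M (fun a b => A (ins k.succ (ins j₂ a)) (ins k.succ (ins j₂ b))))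
        = - ∑ k : Fin (M+2), ∑ j₂ : Fin (M+1),
            (-1:R)^((k:ℕ)+1+(j₂:ℕ)) * (A 0 k.succ.succ * A 1 (ins k.succ j₂.succ)) *
              pf R M (fun a b => A (ins k.succ (ins j₂ a)) (ins k.succ (ins j₂ b))) := by
      rw [← Fintype.sum_prod_type', ← Fintype.sum_prod_type', ← Finset.sum_neg_distrib]
      rw [← Equiv.sum_comp (Function.Involutive.toPerm (invβ M) (invβ_invol M)) (fun t : Fin (M+2) × Fin (M+1) =>
        (-1:R)^((t.1:ℕ)+1+(t.2:ℕ)) * (A 1 t.1.succ.succ * A 0 (ins t.1.succ t.2.succ)) *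
          pf R M (fun a b => A (ins t.1.succ (ins t.2 a)) (ins t.1.succ (ins t.2 b))))]
      refine Finset.sum_congr rfl fun t _ => ?_
      obtain ⟨k, j₂⟩ := t
      have hkl := k.isLt
      have hjl := j₂.isLt
      rw [show Function.Involutive.toPerm (invβ M) (invβ_invol M) (k, j₂) = invβ M (k, j₂) from rfl]
      by_cases h : (j₂:ℕ) < (k:ℕ)
      · have hβ : invβ M (k, j₂) = (⟨(j₂:ℕ), by omega⟩, ⟨(k:ℕ)-1, by omega⟩) := by
          unfold invβ
          rw [dif_pos h]
        rw [hβ]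
        clear hβ
        have hmat : (fun (a b : Fin M) => A (ins (⟨(j₂:ℕ), by omega⟩ : Fin (M+2)).succ
              (ins (⟨(k:ℕ)-1, by omega⟩ : Fin (M+1)) a))
              (ins (⟨(j₂:ℕ), by omega⟩ : Fin (M+2)).succ
              (ins (⟨(k:ℕ)-1, by omega⟩ : Fin (M+1)) b)))
            = (fun a b => A (ins k.succ (ins j₂ a)) (ins k.succ (ins j₂ b))) := by
          funext a b
          rw [flip1c M k j₂ h, flip1c M k j₂ h]
        simp only
        rw [flip1a M k j₂ h, flip1b M k j₂ h, hmat]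
        clear hmat
        rw [show (k:ℕ)+1+(j₂:ℕ) = ((j₂:ℕ)+1+((k:ℕ)-1)) + 1 by omega, pow_succ]
        ring
      · have hβ : invβ M (k, j₂) = (⟨(j₂:ℕ)+1, by omega⟩, ⟨(k:ℕ), by omega⟩) := by
          unfold invβ
          rw [dif_neg h]
        rw [hβ]
        clear hβ
        have hmat : (fun (a b : Fin M) => A (ins (⟨(j₂:ℕ)+1, by omega⟩ : Fin (M+2)).succ
              (ins (⟨(k:ℕ), by omega⟩ : Fin (M+1)) a))
              (ins (⟨(j₂:ℕ)+1, by omega⟩ : Fin (M+2)).succ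
              (ins (⟨(k:ℕ), by omega⟩ : Fin (M+1)) b)))
            = (fun a b => A (ins k.succ (ins j₂ a)) (ins k.succ (ins j₂ b))) := by
          funext a b
          rw [flip2c M k j₂ h, flip2c M k j₂ h]
        simp only
        rw [flip2a M k j₂ h, flip2b M k j₂ h, hmat]
        clear hmat
        rw [show (j₂:ℕ)+1+1+(k:ℕ) = ((k:ℕ)+1+(j₂:ℕ)) + 1 by omega, pow_succ]
        ring
    rw [hflip]
    ring

lemma ins_ne_succ {N : ℕ} (j : Fin (N+1)) (a : Fin N) : ins j a ≠ j.succ := by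
  simp only [ins, ne_eq, Fin.succ_inj]
  exact Fin.succAbove_ne j a

lemma adj_ins_left {N : ℕ} (x' y' : Fin (N+1)) (h : (x':ℕ)+1 = (y':ℕ)) (a : Fin N) :
    Equiv.swap x'.succ y'.succ (ins x' a) = ins y' a := by
  rw [Equiv.swap_apply_def]
  split_ifs with h1 h2
  · exact absurd h1 (ins_ne_succ x' a)
  · have h2v := congrArg Fin.val h2
    rw [ins_val] at h2v
    simp only [Fin.val_succ] at h2v
    apply Fin.ext
    rw [ins_val]
    simp only [Fin.val_succ]
    split_ifs at h2v ⊢ <;> omega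
  · have h2v : ¬ (ins x' a : ℕ) = (y':ℕ)+1 := fun hh => h2 (Fin.ext (by simpa using hh))
    rw [ins_val] at h2v
    apply Fin.ext
    rw [ins_val, ins_val]
    split_ifs at h2v ⊢ <;> omega

lemma adj_ins_right {N : ℕ} (x' y' : Fin (N+1)) (h : (x':ℕ)+1 = (y':ℕ)) (a : Fin N) :
    Equiv.swap x'.succ y'.succ (ins y' a) = ins x' a := by
  rw [← adj_ins_left x' y' h a, Equiv.swap_apply_self]

lemma adj_ins_other {N : ℕ} (x' y' j : Fin (N+1)) (h : (x':ℕ)+1 = (y':ℕ))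
    (hjx : j ≠ x') (hjy : j ≠ y') :
    ∃ a b : Fin N, a ≠ b ∧
      (∀ c, Equiv.swap x'.succ y'.succ (ins j c) = ins j (Equiv.swap a b c)) := by
  obtain ⟨a, ha⟩ := exists_ins_eq j (Fin.succ_ne_zero x') ((Fin.succ_injective _).ne (Ne.symm hjx))
  obtain ⟨b, hb⟩ := exists_ins_eq j (Fin.succ_ne_zero y') ((Fin.succ_injective _).ne (Ne.symm hjy))
  have hxy : x'.succ ≠ y'.succ := by
    intro e
    have := congrArg Fin.val e
    simp only [Fin.val_succ] at this
    omega
  refine ⟨a, b, ?_, ?_⟩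
  · intro e
    exact hxy (ha ▸ hb ▸ congrArg (ins j) e)
  · intro c
    rcases eq_or_ne c a with rfl | hca
    · rw [ha, Equiv.swap_apply_left, Equiv.swap_apply_left, hb]
    rcases eq_or_ne c b with rfl | hcb
    · rw [hb, Equiv.swap_apply_right, Equiv.swap_apply_right, ha]
    · rw [Equiv.swap_apply_of_ne_of_ne hca hcb, Equiv.swap_apply_of_ne_of_ne
        (fun hh => hca (ins_injective j (hh.trans ha.symm)))
        (fun hh => hcb (ins_injective j (hh.trans hb.symm)))]

lemma adjacent {R : Type*} [CommRing R] (N : ℕ)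
    (IH : ∀ (B : Matrix (Fin N) (Fin N) R), (∀ i j, B j i = -B i j) → ∀ σ : Equiv.Perm (Fin N),
      pf R N (fun a b => B (σ a) (σ b)) = ((Equiv.Perm.sign σ : ℤ) : R) * pf R N B)
    (x y : Fin (N+2)) (hxy : (x:ℕ)+1 = (y:ℕ)) (A : Matrix (Fin (N+2)) (Fin (N+2)) R)
    (hA : ∀ i j, A j i = -A i j) :
    pf R (N+2) (fun a b => A (Equiv.swap x y a) (Equiv.swap x y b)) = - pf R (N+2) A := by
  rcases Fin.eq_zero_or_eq_succ x with rfl | ⟨x', rfl⟩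
  · have hy : y = 1 := by
      apply Fin.ext
      simpa using hxy.symm
    rw [hy]
    exact swap01 N A hA
  rcases Fin.eq_zero_or_eq_succ y with rfl | ⟨y', rfl⟩
  · exact absurd hxy (by simp)
  have h' : (x':ℕ)+1 = (y':ℕ) := by
    simp only [Fin.val_succ] at hxy
    omega
  have hx0 : (0 : Fin (N+2)) ≠ x'.succ := (Fin.succ_ne_zero x').symm
  have hy0 : (0 : Fin (N+2)) ≠ y'.succ := (Fin.succ_ne_zero y').symm
  have hτ0 : Equiv.swap x'.succ y'.succ 0 = 0 := Equiv.swap_apply_of_ne_of_ne hx0 hy0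
  have hBexp : pf R (N+2) (fun a b => A (Equiv.swap x'.succ y'.succ a) (Equiv.swap x'.succ y'.succ b))
      = ∑ j : Fin (N+1), (-1:R)^(j:ℕ) * A (Equiv.swap x'.succ y'.succ 0) (Equiv.swap x'.succ y'.succ j.succ) *
          pf R N (fun a b => A (Equiv.swap x'.succ y'.succ (ins j a)) (Equiv.swap x'.succ y'.succ (ins j b))) :=
    pf_succ _
  have hAexp : pf R (N+2) A = ∑ j : Fin (N+1), (-1:R)^(j:ℕ) * A 0 j.succ *
      pf R N (fun a b => A (ins j a) (ins j b)) := pf_succ _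
  rw [hBexp, hAexp, ← Finset.sum_neg_distrib]
  rw [← Equiv.sum_comp (Equiv.swap x' y') (fun j : Fin (N+1) =>
    -((-1:R)^(j:ℕ) * A 0 j.succ * pf R N (fun a b => A (ins j a) (ins j b))))]
  refine Finset.sum_congr rfl fun j _ => ?_
  rw [hτ0]
  by_cases hjx : j = x'
  · subst hjx
    rw [Equiv.swap_apply_left, Equiv.swap_apply_left]
    have hm : (fun (a b : Fin N) => A (Equiv.swap j.succ y'.succ (ins j a)) (Equiv.swap j.succ y'.succ (ins j b)))
        = (fun a b => A (ins y' a) (ins y' b)) := by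
      funext a b
      rw [adj_ins_left j y' h', adj_ins_left j y' h']
    rw [hm]
    rw [show (-1:R)^((y':ℕ)) = -(-1:R)^((j:ℕ)) by rw [← h', pow_succ]; ring]
    ring
  by_cases hjy : j = y'
  · subst hjy
    rw [Equiv.swap_apply_right, Equiv.swap_apply_right]
    have hm : (fun (a b : Fin N) => A (Equiv.swap x'.succ j.succ (ins j a)) (Equiv.swap x'.succ j.succ (ins j b)))
        = (fun a b => A (ins x' a) (ins x' b)) := by
      funext a b
      rw [adj_ins_right x' j h', adj_ins_right x' j h']
    rw [hm]
    rw [show (-1:R)^((x':ℕ)) = -(-1:R)^((j:ℕ)) by rw [← h', pow_succ]; ring]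
    ring
  · rw [Equiv.swap_apply_of_ne_of_ne hjx hjy,
      Equiv.swap_apply_of_ne_of_ne ((Fin.succ_injective _).ne hjx) ((Fin.succ_injective _).ne hjy)]
    obtain ⟨a, b, hab, hswap⟩ := adj_ins_other x' y' j h' hjx hjy
    have hm : (fun (c d : Fin N) => A (Equiv.swap x'.succ y'.succ (ins j c)) (Equiv.swap x'.succ y'.succ (ins j d)))
        = (fun c d => (fun u v => A (ins j u) (ins j v)) (Equiv.swap a b c) (Equiv.swap a b d)) := by
      funext c d
      rw [hswap, hswap]
    rw [hm]
    have hIH := IH (fun u v => A (ins j u) (ins j v)) (fun i j' => hA _ _) (Equiv.swap a b)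
    rw [hIH, Equiv.Perm.sign_swap hab]
    simp only [Units.val_neg, Units.val_one, Int.cast_neg, Int.cast_one]
    ring

lemma grand {R : Type*} [CommRing R] : ∀ (n : ℕ) (A : Matrix (Fin n) (Fin n) R),
    (∀ i j, A j i = -A i j) → ∀ σ : Equiv.Perm (Fin n),
    pf R n (fun a b => A (σ a) (σ b)) = ((Equiv.Perm.sign σ : ℤ) : R) * pf R n A := by
  intro n
  induction n using Nat.strong_induction_on with
  | _ n IH =>
  rcases n with _ | _ | N
  · intro A hA σ
    have hσ : σ = 1 := Equiv.ext fun v => v.elim0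
    subst hσ
    simp [pf_zero]
    exact pf_zero _
  · intro A hA σ
    rw [pf_one, mul_zero]
    exact pf_one _
  intro A hA σ
  have IH' : ∀ (B : Matrix (Fin N) (Fin N) R), (∀ i j, B j i = -B i j) → ∀ τ : Equiv.Perm (Fin N),
      pf R N (fun a b => B (τ a) (τ b)) = ((Equiv.Perm.sign τ : ℤ) : R) * pf R N B :=
    fun B hB τ => IH N (by omega) B hB τ
  have swapGen : ∀ (d : ℕ) (x y : Fin (N+2)), (y:ℕ) = (x:ℕ) + d + 1 →
      ∀ B : Matrix (Fin (N+2)) (Fin (N+2)) R, (∀ i j, B j i = -B i j) →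
      pf R (N+2) (fun a b => B (Equiv.swap x y a) (Equiv.swap x y b)) = - pf R (N+2) B := by
    intro d
    induction d with
    | zero =>
      intro x y hxy B hB
      exact adjacent N IH' x y (by omega) B hB
    | succ d IHd =>
      intro x y hxy B hB
      have hyn := y.isLt
      set z : Fin (N+2) := ⟨(x:ℕ)+1, by omega⟩ with hzdef
      have hxz : (x:ℕ)+1 = (z:ℕ) := rfl
      have hxz' : x ≠ z := by
        simp only [ne_eq, Fin.ext_iff]
        omega
      have hxy' : x ≠ y := by
        simp only [ne_eq, Fin.ext_iff]
        omega
      have hzy' : z ≠ y := by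
        simp only [ne_eq, Fin.ext_iff, ← hxz]
        omega
      have hperm : Equiv.swap x y = Equiv.swap x z * Equiv.swap z y * Equiv.swap x z := by
        apply Equiv.ext
        intro v
        simp only [Equiv.Perm.mul_apply]
        rcases eq_or_ne v x with rfl | hvx
        · rw [Equiv.swap_apply_left, Equiv.swap_apply_left, Equiv.swap_apply_left,
            Equiv.swap_apply_of_ne_of_ne hxy'.symm hzy'.symm]
        rcases eq_or_ne v z with rfl | hvz
        · rw [Equiv.swap_apply_of_ne_of_ne hxz'.symm hzy', Equiv.swap_apply_right,
            Equiv.swap_apply_of_ne_of_ne hxz' hxy', Equiv.swap_apply_left]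
        rcases eq_or_ne v y with rfl | hvy
        · rw [Equiv.swap_apply_right, Equiv.swap_apply_of_ne_of_ne hxy'.symm hzy'.symm,
            Equiv.swap_apply_right, Equiv.swap_apply_right]
        · rw [Equiv.swap_apply_of_ne_of_ne hvx hvy, Equiv.swap_apply_of_ne_of_ne hvx hvz,
            Equiv.swap_apply_of_ne_of_ne hvz hvy, Equiv.swap_apply_of_ne_of_ne hvx hvz]
      have hB1 : ∀ i j, (fun u v => B (Equiv.swap x z u) (Equiv.swap x z v)) j i
          = -(fun u v => B (Equiv.swap x z u) (Equiv.swap x z v)) i j := fun i j => hB _ _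
      have hB2 : ∀ i j, (fun u v => B (Equiv.swap x z (Equiv.swap z y u)) (Equiv.swap x z (Equiv.swap z y v))) j i
          = -(fun u v => B (Equiv.swap x z (Equiv.swap z y u)) (Equiv.swap x z (Equiv.swap z y v))) i j :=
        fun i j => hB _ _
      have e1 : pf R (N+2) (fun a b =>
            B (Equiv.swap x z (Equiv.swap z y (Equiv.swap x z a)))
              (Equiv.swap x z (Equiv.swap z y (Equiv.swap x z b))))
          = - pf R (N+2) (fun a b => B (Equiv.swap x z (Equiv.swap z y a)) (Equiv.swap x z (Equiv.swap z y b))) :=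
        adjacent N IH' x z hxz _ hB2
      have e2 : pf R (N+2) (fun a b => B (Equiv.swap x z (Equiv.swap z y a)) (Equiv.swap x z (Equiv.swap z y b)))
          = - pf R (N+2) (fun a b => B (Equiv.swap x z a) (Equiv.swap x z b)) :=
        IHd z y (by omega) _ hB1
      have e3 : pf R (N+2) (fun a b => B (Equiv.swap x z a) (Equiv.swap x z b)) = - pf R (N+2) B :=
        adjacent N IH' x z hxz B hB
      have hmat : (fun (a b : Fin (N+2)) => B (Equiv.swap x y a) (Equiv.swap x y b))
          = (fun a b => B (Equiv.swap x z (Equiv.swap z y (Equiv.swap x z a)))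
              (Equiv.swap x z (Equiv.swap z y (Equiv.swap x z b)))) := by
        funext a b
        rw [hperm]
        rfl
      rw [hmat, e1, e2, e3]
      ring
  have swapAll : ∀ (x y : Fin (N+2)), x ≠ y →
      ∀ B : Matrix (Fin (N+2)) (Fin (N+2)) R, (∀ i j, B j i = -B i j) →
      pf R (N+2) (fun a b => B (Equiv.swap x y a) (Equiv.swap x y b)) = - pf R (N+2) B := by
    intro x y hne B hB
    rcases lt_or_gt_of_ne hne with hlt | hgt
    · have hv : (x:ℕ) < (y:ℕ) := hlt
      exact swapGen ((y:ℕ) - (x:ℕ) - 1) x y (by omega) B hB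
    · have hv : (y:ℕ) < (x:ℕ) := hgt
      rw [Equiv.swap_comm]
      exact swapGen ((x:ℕ) - (y:ℕ) - 1) y x (by omega) B hB
  revert A
  induction σ using Equiv.Perm.swap_induction_on
  case _ =>
    intro A hA
    simp only [Equiv.Perm.one_apply, Equiv.Perm.sign_one, Units.val_one, Int.cast_one, one_mul]
  case _ f x y hne IHf =>
    intro A hA
    have hmat : (fun (a b : Fin (N+2)) => A ((Equiv.swap x y * f) a) ((Equiv.swap x y * f) b))
        = (fun a b => (fun u v => A (Equiv.swap x y u) (Equiv.swap x y v)) (f a) (f b)) := rfl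
    have hstep := IHf (fun u v => A (Equiv.swap x y u) (Equiv.swap x y v)) (fun i j => hA _ _)
    rw [hmat, hstep, swapAll x y hne A hA, Equiv.Perm.sign_mul, Equiv.Perm.sign_swap hne]
    simp only [Units.val_mul, Units.val_neg, Units.val_one, Int.cast_mul, Int.cast_neg, Int.cast_one]
    ring

lemma image_orderEmb_perm {n p : ℕ} (K : Finset (Fin p)) (hK : K.card = n) (σ : Equiv.Perm (Fin n)) :
    Finset.image (fun x => K.orderEmbOfFin hK (σ x)) Finset.univ = K := by
  apply Finset.coe_injective
  rw [Finset.coe_image, Finset.coe_univ, Set.image_univ]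
  rw [show (fun x => K.orderEmbOfFin hK (σ x)) = (K.orderEmbOfFin hK) ∘ ⇑σ from rfl,
    Set.range_comp, Equiv.range_eq_univ, Set.image_univ, Finset.range_orderEmbOfFin]

end PfAux

open PfAux in
/-- The minor-summation (Ishikawa–Wakayama) formula: for a `2r × m` matrix `S` (`m > 2r`)
and a `2r × 2r` skew-symmetric matrix `J`, every even-size principal Pfaffian minor of
`A = Sᵀ J S` on an index set `α ⊆ [m]` satisfies
`Pf(A(α,α)) = Σ_{K ⊆ [2r], |K| = |α|} Pf(J(K,K)) · det S(K, α)`;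
in particular it vanishes whenever `|α| > 2r`. -/
theorem pfaffian_minor_summation (r m : ℕ) (hm : 2 * r < m)
    (S : Matrix (Fin (2*r)) (Fin m) ℝ)
    (J : Matrix (Fin (2*r)) (Fin (2*r)) ℝ) (hJ : Jᵀ = -J)
    (α : Finset (Fin m)) (hα : Even α.card) :
    pf ℝ α.card ((Sᵀ * J * S).submatrix (α.orderEmbOfFin rfl) (α.orderEmbOfFin rfl)) =
      (∑ K : {K : Finset (Fin (2*r)) // K.card = α.card},
        pf ℝ α.card (J.submatrix (K.1.orderEmbOfFin K.2) (K.1.orderEmbOfFin K.2)) *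
          (S.submatrix (K.1.orderEmbOfFin K.2) (α.orderEmbOfFin rfl)).det) ∧
    (2 * r < α.card →
      pf ℝ α.card ((Sᵀ * J * S).submatrix (α.orderEmbOfFin rfl) (α.orderEmbOfFin rfl)) = 0) := by
  classical
  have hJ' : ∀ k l, J l k = -J k l := fun k l => by
    have h := congrFun (congrFun hJ k) l
    simpa using h
  have vanish : ∀ g : Fin α.card → Fin (2*r), ¬ Function.Injective g →
      pf ℝ α.card (fun a b => J (g a) (g b)) = 0 := by
    intro g hg
    obtain ⟨x, y, hgxy, hxy⟩ := Function.not_injective_iff.mp hg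
    have hga : ∀ c, g (Equiv.swap x y c) = g c := by
      intro c
      rcases eq_or_ne c x with rfl | hcx
      · rw [Equiv.swap_apply_left]
        exact hgxy.symm
      rcases eq_or_ne c y with rfl | hcy
      · rw [Equiv.swap_apply_right]
        exact hgxy
      · rw [Equiv.swap_apply_of_ne_of_ne hcx hcy]
    have h1 := grand α.card (fun a b => J (g a) (g b)) (fun i j => hJ' _ _) (Equiv.swap x y)
    have h2 : (fun a b => J (g (Equiv.swap x y a)) (g (Equiv.swap x y b)))
        = (fun a b => J (g a) (g b)) := by
      funext a b
      rw [hga, hga]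
    rw [show (fun a b => (fun a b => J (g a) (g b)) (Equiv.swap x y a) (Equiv.swap x y b))
        = (fun a b => J (g (Equiv.swap x y a)) (g (Equiv.swap x y b))) from rfl] at h1
    rw [h2, Equiv.Perm.sign_swap hxy] at h1
    simp only [Units.val_neg, Units.val_one, Int.cast_neg, Int.cast_one, neg_one_mul] at h1
    linarith
  have main : pf ℝ α.card ((Sᵀ * J * S).submatrix (α.orderEmbOfFin rfl) (α.orderEmbOfFin rfl)) =
      (∑ K : {K : Finset (Fin (2*r)) // K.card = α.card},
        pf ℝ α.card (J.submatrix (K.1.orderEmbOfFin K.2) (K.1.orderEmbOfFin K.2)) *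
          (S.submatrix (K.1.orderEmbOfFin K.2) (α.orderEmbOfFin rfl)).det) := by
    have hmat : (Sᵀ * J * S).submatrix (α.orderEmbOfFin rfl) (α.orderEmbOfFin rfl)
        = fun i j => ∑ k, ∑ l, S k (α.orderEmbOfFin rfl i) * J k l * S l (α.orderEmbOfFin rfl j) := by
      funext i j
      simp only [Matrix.submatrix_apply, Matrix.mul_apply, Matrix.transpose_apply, Finset.sum_mul]
      rw [Finset.sum_comm]
    have hkey : pf ℝ α.card (fun i j => ∑ k, ∑ l,
          S k (α.orderEmbOfFin rfl i) * J k l * S l (α.orderEmbOfFin rfl j))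
        = ∑ g : Fin α.card → Fin (2*r), (∏ i, S (g i) (α.orderEmbOfFin rfl i)) *
            pf ℝ α.card (fun a b => J (g a) (g b)) :=
      key α.card J (fun k i => S k (α.orderEmbOfFin rfl i))
    rw [hmat, hkey]
    rw [← Finset.sum_filter_add_sum_filter_not Finset.univ
      (fun g : Fin α.card → Fin (2*r) => Function.Injective g)]
    have h2z : (∑ g ∈ Finset.filter (fun g : Fin α.card → Fin (2*r) => ¬ Function.Injective g)
        Finset.univ, (∏ i, S (g i) (α.orderEmbOfFin rfl i)) *
          pf ℝ α.card (fun a b => J (g a) (g b))) = 0 :=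
      Finset.sum_eq_zero fun g hg => by
        rw [vanish g (Finset.mem_filter.mp hg).2, mul_zero]
    rw [h2z, add_zero]
    have hstep1 : (∑ t : {K : Finset (Fin (2*r)) // K.card = α.card} × Equiv.Perm (Fin α.card),
          ((Equiv.Perm.sign t.2 : ℤ) : ℝ) *
            (∏ i, S (t.1.1.orderEmbOfFin t.1.2 (t.2 i)) (α.orderEmbOfFin rfl i)) *
              pf ℝ α.card (fun a b => J (t.1.1.orderEmbOfFin t.1.2 a) (t.1.1.orderEmbOfFin t.1.2 b)))
        = ∑ g ∈ Finset.filter (fun g : Fin α.card → Fin (2*r) => Function.Injective g) Finset.univ,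
            (∏ i, S (g i) (α.orderEmbOfFin rfl i)) * pf ℝ α.card (fun a b => J (g a) (g b)) := by
      refine Finset.sum_bij (fun t _ => fun x => t.1.1.orderEmbOfFin t.1.2 (t.2 x)) ?_ ?_ ?_ ?_
      · intro t _
        simp only [Finset.mem_filter, Finset.mem_univ, true_and]
        exact fun a b hab => t.2.injective ((t.1.1.orderEmbOfFin t.1.2).injective hab)
      · intro t1 _ t2 _ heq
        obtain ⟨⟨K1, hK1⟩, σ1⟩ := t1
        obtain ⟨⟨K2, hK2⟩, σ2⟩ := t2
        have heq' : (fun x => K1.orderEmbOfFin hK1 (σ1 x)) = (fun x => K2.orderEmbOfFin hK2 (σ2 x)) := heq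
        have hKeq : K1 = K2 := by
          have e1 := image_orderEmb_perm K1 hK1 σ1
          rw [heq', image_orderEmb_perm K2 hK2 σ2] at e1
          exact e1.symm
        subst hKeq
        refine Prod.ext (rfl) (Equiv.ext fun x => ?_)
        exact (K1.orderEmbOfFin hK1).injective (congrFun heq' x)
      · intro g hg
        have hginj : Function.Injective g := by
          simpa using (Finset.mem_filter.mp hg).2
        have hKcard : (Finset.image g Finset.univ).card = α.card := by
          rw [Finset.card_image_of_injective _ hginj, Finset.card_univ, Fintype.card_fin]
        have hmem : ∀ x, g x ∈ Finset.image g Finset.univ :=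
          fun x => Finset.mem_image_of_mem g (Finset.mem_univ x)
        have hσ0inj : Function.Injective (fun x =>
            ((Finset.image g Finset.univ).orderIsoOfFin hKcard).symm ⟨g x, hmem x⟩) := by
          intro a b hab
          apply hginj
          have h3 := congrArg ((Finset.image g Finset.univ).orderIsoOfFin hKcard) hab
          simp only [OrderIso.apply_symm_apply] at h3
          exact congrArg Subtype.val h3
        refine ⟨(⟨Finset.image g Finset.univ, hKcard⟩,
          Equiv.ofBijective _ (Finite.injective_iff_bijective.mp hσ0inj)), Finset.mem_univ _, ?_⟩
        funext x
        show (Finset.image g Finset.univ).orderEmbOfFin hKcard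
          (((Finset.image g Finset.univ).orderIsoOfFin hKcard).symm ⟨g x, hmem x⟩) = g x
        rw [← Finset.coe_orderIsoOfFin_apply]
        simp only [OrderIso.apply_symm_apply]
      · intro t _
        have hg : pf ℝ α.card (fun a b => J (t.1.1.orderEmbOfFin t.1.2 (t.2 a))
              (t.1.1.orderEmbOfFin t.1.2 (t.2 b)))
            = ((Equiv.Perm.sign t.2 : ℤ) : ℝ) * pf ℝ α.card
              (fun a b => J (t.1.1.orderEmbOfFin t.1.2 a) (t.1.1.orderEmbOfFin t.1.2 b)) :=
          grand α.card (fun a b => J (t.1.1.orderEmbOfFin t.1.2 a) (t.1.1.orderEmbOfFin t.1.2 b))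
            (fun i j => hJ' _ _) t.2
        rw [hg]
        ring
    rw [← hstep1, Fintype.sum_prod_type]
    refine Finset.sum_congr rfl fun K _ => ?_
    rw [Matrix.det_apply', Finset.mul_sum]
    refine Finset.sum_congr rfl fun σ _ => ?_
    have hsub : (J.submatrix (K.1.orderEmbOfFin K.2) (K.1.orderEmbOfFin K.2))
        = fun a b => J (K.1.orderEmbOfFin K.2 a) (K.1.orderEmbOfFin K.2 b) := rfl
    rw [hsub]
    have hprod : (∏ i, (S.submatrix (K.1.orderEmbOfFin K.2) (α.orderEmbOfFin rfl)) (σ i) i)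
        = ∏ i, S (K.1.orderEmbOfFin K.2 (σ i)) (α.orderEmbOfFin rfl i) := by
      exact Finset.prod_congr rfl fun i _ => rfl
    rw [hprod]
    ring
  refine ⟨main, fun hlt => ?_⟩
  rw [main]
  have hempty : IsEmpty {K : Finset (Fin (2*r)) // K.card = α.card} := by
    refine ⟨fun K => ?_⟩
    have h1 : K.1.card ≤ 2*r := by
      have := Finset.card_le_card (Finset.subset_univ K.1)
      simpa [Finset.card_univ] using this
    omega
  rw [Finset.univ_eq_empty, Finset.sum_empty]
end
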